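/- arXiv:0912.2212 — 4 statements merged into one kernel-verified Lean document; each statement's English description precedes it below -/
import Mathlib

section
/- The image set of any idempotent in the biHecke monoid of a finite Coxeter group is an interval in left weak order. -/
open scoped Classical

noncomputable section

variable {B W : Type*} [Group W] {M : CoxeterMatrix B}

/-- The elementary bubble antisorting operator `π_i` on a Coxeter group:
`w·π_i = w` if `i` is a right descent of `w`, and `w·π_i = w s_i` otherwise. -/
noncomputable def piOp (cs : CoxeterSystem M W) (i : B) : W → W :=
  fun w => if cs.IsRightDescent w i then w else w * cs.simple i

/-- The elementary bubble sorting operator `π̄_i` on a Coxeter group: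
`w·π̄_i = w s_i` if `i` is a right descent of `w`, and `w·π̄_i = w` otherwise. -/
noncomputable def pibOp (cs : CoxeterSystem M W) (i : B) : W → W :=
  fun w => if cs.IsRightDescent w i then w * cs.simple i else w

/-- The biHecke monoid: the submonoid of `Function.End W` generated by the antisorting
operators `π_i` and the sorting operators `π̄_i`. -/
noncomputable def biHecke (cs : CoxeterSystem M W) : Submonoid (Function.End W) :=
  Submonoid.closure ({f | ∃ i, f = piOp cs i} ∪ {f | ∃ i, f = pibOp cs i})

/-- Left weak order: `u ≤_L v` iff `ℓ(v u⁻¹) + ℓ(u) = ℓ(v)`. -/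
noncomputable def leL (cs : CoxeterSystem M W) (u v : W) : Prop :=
  cs.length (v * u⁻¹) + cs.length u = cs.length v

/-- Right weak order: `u ≤_R v` iff `ℓ(u) + ℓ(u⁻¹ v) = ℓ(v)`. -/
noncomputable def leR (cs : CoxeterSystem M W) (u v : W) : Prop :=
  cs.length u + cs.length (u⁻¹ * v) = cs.length v

/-- Bruhat order: `u ≤_B v` iff some reduced word of `v` has a subword with product `u`. -/
noncomputable def leB (cs : CoxeterSystem M W) (u v : W) : Prop :=
  ∃ l : List B, cs.IsReduced l ∧ cs.wordProd l = v ∧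
    ∃ l' : List B, l'.Sublist l ∧ cs.wordProd l' = u

/-- Right action of a word of operators: apply the operators from left to right. -/
noncomputable def actWord (ops : B → W → W) (l : List B) (w : W) : W :=
  l.foldl (fun x i => ops i x) w

/-- The function `e_w = π_{w⁻¹ w₀} π̄_{w₀ w}` (given reduced words `l1` for `w⁻¹ w₀` and
`l2` for `w₀ w`), acting on the right. -/
noncomputable def eIdem (cs : CoxeterSystem M W) (l1 l2 : List B) : W → W :=
  fun x => actWord (pibOp cs) l2 (actWord (piOp cs) l1 x)

/-- The parabolic subgroup `W_K`. -/
noncomputable def parab (cs : CoxeterSystem M W) (K : Set B) : Subgroup W :=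
  Subgroup.closure (cs.simple '' K)

/-- `K` is a right block of `w` if `w W_K = W_J w` for some `J`. -/
noncomputable def isRightBlock (cs : CoxeterSystem M W) (w : W) (K : Set B) : Prop :=
  ∃ J : Set B, (fun x => w * x) '' (parab cs K : Set W) = (fun x => x * w) '' (parab cs J : Set W)

/-- `J` is a left block of `w` if `w W_K = W_J w` for some `K`. -/
noncomputable def isLeftBlock (cs : CoxeterSystem M W) (w : W) (J : Set B) : Prop :=
  ∃ K : Set B, (fun x => w * x) '' (parab cs K : Set W) = (fun x => x * w) '' (parab cs J : Set W)

/-- The cutting relation: `v ⊑ w` iff `v = w^K` for some right block `K` of `w`, i.e.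
`w = v · u` with `u ∈ W_K` and `v` has no right descents in `K`. -/
noncomputable def cuts (cs : CoxeterSystem M W) (v w : W) : Prop :=
  ∃ K J : Set B,
    ((fun x => w * x) '' (parab cs K : Set W) = (fun x => x * w) '' (parab cs J : Set W)) ∧
    ∃ u ∈ parab cs K, w = v * u ∧ ∀ k ∈ K, ¬ cs.IsRightDescent v k

/-- Covering relation of left weak order. -/
noncomputable def covL (cs : CoxeterSystem M W) (x y : W) : Prop :=
  leL cs x y ∧ x ≠ y ∧ ∀ z, leL cs x z → leL cs z y → z = x ∨ z = y

end

section BiHeckeAux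

open CoxeterSystem List

variable {B W : Type*} [Group W] {M : CoxeterMatrix B} (cs : CoxeterSystem M W)

private lemma conj_eq_iff (a t c : W) : a * t * a⁻¹ = c ↔ t = a⁻¹ * c * a := by
  constructor <;> intro h <;> subst h <;> group

/-- The underlying function of the sign permutation attached to a simple reflection. -/
private noncomputable def sigmaFun (i : B) : W × ZMod 2 → W × ZMod 2 :=
  fun p => (cs.simple i * p.1 * cs.simple i,
    p.2 + if p.1 = cs.simple i then 1 else 0)

private lemma zmod2_add_self (c : ZMod 2) : c + c = 0 := by revert c; decide

private lemma zmod2_cases (c : ZMod 2) : c = 0 ∨ c = 1 := by revert c; decide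

private lemma sigmaFun_involutive (i : B) : Function.Involutive (sigmaFun cs i) := by
  intro p
  have hss := cs.simple_mul_simple_self i
  unfold sigmaFun
  have h1 : ∀ x : W, cs.simple i * (cs.simple i * x * cs.simple i) * cs.simple i = x := by
    intro x
    calc cs.simple i * (cs.simple i * x * cs.simple i) * cs.simple i
        = (cs.simple i * cs.simple i) * x * (cs.simple i * cs.simple i) := by group
      _ = x := by rw [hss]; group
  have h2 : (cs.simple i * p.1 * cs.simple i = cs.simple i) ↔ p.1 = cs.simple i := by
    constructor
    · intro h
      have := congrArg (fun x => cs.simple i * x * cs.simple i) h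
      simpa [h1 p.1, hss] using this
    · intro h; rw [h, hss, one_mul]
  refine Prod.ext (h1 p.1) ?_
  simp only [h2]
  by_cases h : p.1 = cs.simple i <;> simp [h, add_assoc, zmod2_add_self]

/-- The sign permutation attached to a simple reflection. -/
private noncomputable def sigmaPerm (i : B) : Equiv.Perm (W × ZMod 2) :=
  (sigmaFun_involutive cs i).toPerm _

@[simp] private lemma sigmaPerm_apply (i : B) (p : W × ZMod 2) :
    sigmaPerm cs i p = (cs.simple i * p.1 * cs.simple i,
      p.2 + if p.1 = cs.simple i then 1 else 0) := rfl

private lemma simple_conj_pow (j : B) (p : W) (hp : cs.simple j * p * cs.simple j = p⁻¹)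
    (n : ℕ) : cs.simple j * p ^ n * cs.simple j = (p ^ n)⁻¹ := by
  have h := map_pow (MulAut.conj (cs.simple j)) p n
  simp only [MulAut.conj_apply, cs.inv_simple] at h
  rw [h, hp, inv_pow]

private lemma sigma_liftable : CoxeterMatrix.IsLiftable M (sigmaPerm cs) := by
  intro i j
  set m := M i j with hm
  set p := cs.simple i * cs.simple j with hpdef
  have hp : p ^ m = 1 := cs.simple_mul_simple_pow i j
  have hsps : cs.simple j * p * cs.simple j = p⁻¹ := by
    rw [hpdef, mul_inv_rev, cs.inv_simple, cs.inv_simple]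
    calc cs.simple j * (cs.simple i * cs.simple j) * cs.simple j
        = cs.simple j * cs.simple i * (cs.simple j * cs.simple j) := by group
      _ = cs.simple j * cs.simple i := by rw [cs.simple_mul_simple_self]; group
  -- the sequence of reflections
  set C : ℕ → W := fun r => (p ^ ((r + 1) / 2))⁻¹ * cs.simple j * p ^ (r / 2) with hC
  have hCperiod : ∀ r, C (r + m) = C r := by
    intro r
    simp only [hC]
    set a := (r + 1) / 2 with hadef
    set b := r / 2 with hbdef
    set a' := (r + m + 1) / 2 with ha'def
    set b' := (r + m) / 2 with hb'def
    have hb : b ≤ b' := by omega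
    set c := b' - b with hcdef
    have hconj : cs.simple j * p ^ c * cs.simple j = (p ^ c)⁻¹ := simple_conj_pow cs j p hsps c
    have hswap : cs.simple j * p ^ c = (p ^ c)⁻¹ * cs.simple j := by
      rw [← hconj, mul_assoc, cs.simple_mul_simple_self, mul_one]
    have e1 : p ^ b' = p ^ c * p ^ b := by rw [← pow_add]; congr 1; omega
    calc (p ^ a')⁻¹ * cs.simple j * p ^ b'
        = (p ^ a')⁻¹ * (cs.simple j * p ^ c) * p ^ b := by rw [e1]; group
      _ = (p ^ a')⁻¹ * ((p ^ c)⁻¹ * cs.simple j) * p ^ b := by rw [hswap]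
      _ = ((p ^ c) * (p ^ a'))⁻¹ * cs.simple j * p ^ b := by rw [mul_inv_rev]; group
      _ = (p ^ (c + a'))⁻¹ * cs.simple j * p ^ b := by rw [pow_add]
      _ = (p ^ a)⁻¹ * cs.simple j * p ^ b := by
          have h9 : c + a' = a + m := by omega
          rw [h9, pow_add, hp, mul_one]
  have hτ : ∀ (n : ℕ) (t : W) (ε : ZMod 2),
      ((sigmaPerm cs i * sigmaPerm cs j) ^ n) (t, ε) =
        (p ^ n * t * (p ^ n)⁻¹,
          ε + ∑ r ∈ Finset.range (2 * n), if t = C r then 1 else 0) := by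
    intro n
    induction n with
    | zero => intro t ε; simp
    | succ n ih =>
      intro t ε
      rw [pow_succ']
      have : ((sigmaPerm cs i * sigmaPerm cs j) *
          (sigmaPerm cs i * sigmaPerm cs j) ^ n) (t, ε) =
          ((sigmaPerm cs i * sigmaPerm cs j))
            (((sigmaPerm cs i * sigmaPerm cs j) ^ n) (t, ε)) := rfl
      rw [this, ih]
      set x := p ^ n * t * (p ^ n)⁻¹ with hx
      have happ : ∀ q : W × ZMod 2, (sigmaPerm cs i * sigmaPerm cs j) q =
          (cs.simple i * (cs.simple j * q.1 * cs.simple j) * cs.simple i,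
            q.2 + (if q.1 = cs.simple j then 1 else 0) +
              (if cs.simple j * q.1 * cs.simple j = cs.simple i then 1 else 0)) := by
        intro q
        show sigmaPerm cs i (sigmaPerm cs j q) = _
        simp [sigmaPerm_apply, add_assoc]
      rw [happ]
      have hfst : cs.simple i * (cs.simple j * x * cs.simple j) * cs.simple i =
          p ^ (n + 1) * t * (p ^ (n + 1))⁻¹ := by
        rw [hx, hpdef]
        have : (cs.simple i * cs.simple j) ^ (n + 1) =
            (cs.simple i * cs.simple j) * (cs.simple i * cs.simple j) ^ n := by
          rw [pow_succ']
        rw [this, mul_inv_rev, mul_inv_rev, cs.inv_simple, cs.inv_simple]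
        group
      have hc1 : (x = cs.simple j) ↔ (t = C (2 * n)) := by
        have : C (2 * n) = (p ^ n)⁻¹ * cs.simple j * p ^ n := by
          simp only [hC]
          have e1 : (2 * n + 1) / 2 = n := by omega
          have e2 : 2 * n / 2 = n := by omega
          rw [e1, e2]
        rw [this, hx]
        constructor
        · intro h
          have := (conj_eq_iff (p ^ n) t (cs.simple j)).mp h
          rw [this]
        · intro h; rw [h]; group
      have hc2 : (cs.simple j * x * cs.simple j = cs.simple i) ↔ (t = C (2 * n + 1)) := by
        have hCval : C (2 * n + 1) = (p ^ (n + 1))⁻¹ * cs.simple j * p ^ n := by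
          simp only [hC]
          have e1 : (2 * n + 1 + 1) / 2 = n + 1 := by omega
          have e2 : (2 * n + 1) / 2 = n := by omega
          rw [e1, e2]
        have hxval : (cs.simple j * x * cs.simple j = cs.simple i) ↔
            (x = cs.simple j * cs.simple i * cs.simple j) := by
          constructor
          · intro h
            have := congrArg (fun y => cs.simple j * y * cs.simple j) h
            rw [← this]
            rw [show cs.simple j * (cs.simple j * x * cs.simple j) * cs.simple j
              = (cs.simple j * cs.simple j) * x * (cs.simple j * cs.simple j) by group,
              cs.simple_mul_simple_self]
            group
          · intro h
            rw [h, show cs.simple j * (cs.simple j * cs.simple i * cs.simple j) * cs.simple j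
              = (cs.simple j * cs.simple j) * cs.simple i * (cs.simple j * cs.simple j) by group,
              cs.simple_mul_simple_self]
            group
        rw [hxval, hx]
        have hjij : cs.simple j * cs.simple i * cs.simple j = p⁻¹ * cs.simple j := by
          rw [hpdef, mul_inv_rev, cs.inv_simple, cs.inv_simple]
        constructor
        · intro h
          have := (conj_eq_iff (p ^ n) t _).mp h
          rw [this, hCval, hjij]
          rw [show p ^ (n+1) = p * p ^ n by rw [pow_succ']]
          group
        · intro h
          rw [h, hCval, hjij]
          rw [show p ^ (n+1) = p * p ^ n by rw [pow_succ']]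
          group
      refine Prod.ext hfst ?_
      simp only [hc1, hc2]
      have hrange : ∑ r ∈ Finset.range (2 * (n + 1)), (if t = C r then (1 : ZMod 2) else 0) =
          (∑ r ∈ Finset.range (2 * n), if t = C r then 1 else 0) +
            (if t = C (2 * n) then 1 else 0) + (if t = C (2 * n + 1)then 1 else 0) := by
        rw [show 2 * (n + 1) = (2 * n + 1) + 1 by omega, Finset.sum_range_succ,
          Finset.sum_range_succ]
      rw [hrange]
      push_cast
      ring
  have hper : ∀ r, C (m + r) = C r := fun r => by rw [Nat.add_comm]; exact hCperiod r
  apply Equiv.ext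
  rintro ⟨t, ε⟩
  rw [hτ m t ε]
  have hsplit : ∑ r ∈ Finset.range (2 * m), (if t = C r then (1 : ZMod 2) else 0) =
      (∑ r ∈ Finset.range m, if t = C r then 1 else 0) +
        ∑ r ∈ Finset.range m, if t = C (m + r) then 1 else 0 := by
    rw [show 2 * m = m + m by omega]
    rw [Finset.sum_range_add]
  simp only [hper] at hsplit
  rw [hsplit, zmod2_add_self, add_zero, hp]
  simp

/-- The lift of the sign permutations to `W`. -/
private noncomputable def phiHom : W →* Equiv.Perm (W × ZMod 2) :=
  cs.lift ⟨sigmaPerm cs, sigma_liftable cs⟩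

private lemma phiHom_simple (i : B) : phiHom cs (cs.simple i) = sigmaPerm cs i :=
  cs.lift_apply_simple (sigma_liftable cs) i

/-- The sign cocycle: `eta cs w t = 1` iff `t` is a "right inversion counted oddly". -/
private noncomputable def eta (w t : W) : ZMod 2 := (phiHom cs w (t, 0)).2

private lemma phiHom_apply (w t : W) (ε : ZMod 2) :
    phiHom cs w (t, ε) = (w * t * w⁻¹, ε + eta cs w t) := by
  have main : ∀ w t ε, (phiHom cs w (t, ε)).1 = w * t * w⁻¹ ∧
      (phiHom cs w (t, ε)).2 = ε + (phiHom cs w (t, 0)).2 := by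
    intro w
    induction w using cs.simple_induction_left with
    | one =>
      intro t ε
      simp only [map_one, Equiv.Perm.coe_one, id_eq]
      constructor
      · group
      · simp
    | mul_simple_left w i ih =>
      intro t ε
      have hmul : phiHom cs (cs.simple i * w) = phiHom cs (cs.simple i) * phiHom cs w :=
        map_mul _ _ _
      have happ : ∀ q : W × ZMod 2, phiHom cs (cs.simple i * w) q =
          sigmaPerm cs i (phiHom cs w q) := by
        intro q; rw [hmul, phiHom_simple]; rfl
      have h1 := (ih t ε).1
      have h2 := (ih t ε).2
      have h0 := (ih t 0).2
      rw [happ, happ]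
      have hq : phiHom cs w (t, ε) =
          (w * t * w⁻¹, (phiHom cs w (t, ε)).2) := Prod.ext h1 rfl
      have hq0 : phiHom cs w (t, 0) =
          (w * t * w⁻¹, (phiHom cs w (t, 0)).2) := Prod.ext (ih t 0).1 rfl
      rw [hq, hq0]
      simp only [sigmaPerm_apply]
      constructor
      · rw [mul_inv_rev, cs.inv_simple]; group
      · simp only [h2]
        ring
  have h := main w t ε
  have h0 : eta cs w t = (phiHom cs w (t, 0)).2 := rfl
  exact Prod.ext h.1 (by rw [h.2, h0])

private lemma eta_mul (u v t : W) :
    eta cs (u * v) t = eta cs v t + eta cs u (v * t * v⁻¹) := by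
  have h : phiHom cs (u * v) (t, 0) = phiHom cs u (phiHom cs v (t, 0)) := by
    rw [map_mul]; rfl
  have h2 := congrArg Prod.snd h
  rw [phiHom_apply, phiHom_apply, phiHom_apply] at h2
  simpa using h2

private lemma eta_one (t : W) : eta cs 1 t = 0 := by
  unfold eta; simp

private lemma eta_simple (i : B) (t : W) :
    eta cs (cs.simple i) t = if t = cs.simple i then 1 else 0 := by
  unfold eta
  rw [phiHom_simple]
  simp

private lemma eta_count (ω : List B) (t : W) :
    eta cs (cs.wordProd ω) t = ((cs.rightInvSeq ω).count t : ZMod 2) := by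
  induction ω with
  | nil => simp [eta_one]
  | cons i ω ih =>
    rw [cs.wordProd_cons, eta_mul, ih]
    have hris : cs.rightInvSeq (i :: ω) =
        ((cs.wordProd ω)⁻¹ * cs.simple i * cs.wordProd ω) :: cs.rightInvSeq ω := rfl
    rw [hris, List.count_cons]
    have hiff : (cs.wordProd ω * t * (cs.wordProd ω)⁻¹ = cs.simple i) ↔
        (t = (cs.wordProd ω)⁻¹ * cs.simple i * cs.wordProd ω) := by
      rw [conj_eq_iff]
    rw [eta_simple]
    push_cast
    rw [hiff]
    congr 1
    simp only [beq_iff_eq]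
    exact if_congr eq_comm rfl rfl

private lemma eta_self {t : W} (ht : cs.IsReflection t) : eta cs t t = 1 := by
  obtain ⟨v, i, rfl⟩ := ht
  set T := v * cs.simple i * v⁻¹ with hT
  have hassoc : T = v * (cs.simple i * v⁻¹) := by rw [hT]; group
  have e0 : eta cs T T = eta cs (v * (cs.simple i * v⁻¹)) T :=
    congrArg (fun x => eta cs x T) hassoc
  have e1 : eta cs (v * (cs.simple i * v⁻¹)) T =
      eta cs (cs.simple i * v⁻¹) T +
        eta cs v ((cs.simple i * v⁻¹) * T * (cs.simple i * v⁻¹)⁻¹) := eta_mul ..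
  have harg1 : (cs.simple i * v⁻¹) * T * (cs.simple i * v⁻¹)⁻¹ = cs.simple i := by
    rw [hT]; group
  have e2 : eta cs (cs.simple i * v⁻¹) T =
      eta cs v⁻¹ T + eta cs (cs.simple i) (v⁻¹ * T * v⁻¹⁻¹) := eta_mul ..
  have harg2 : v⁻¹ * T * v⁻¹⁻¹ = cs.simple i := by rw [hT]; group
  have e3 : eta cs (cs.simple i) (cs.simple i) = 1 := by rw [eta_simple, if_pos rfl]
  have key : eta cs v⁻¹ T + eta cs v (cs.simple i) = 0 := by
    have h := eta_mul cs v v⁻¹ T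
    rw [mul_inv_cancel, eta_one, harg2] at h
    exact h.symm
  rw [e0, e1, e2, harg1, harg2, e3]
  calc eta cs v⁻¹ T + 1 + eta cs v (cs.simple i)
      = (eta cs v⁻¹ T + eta cs v (cs.simple i)) + 1 := by ring
    _ = 1 := by rw [key, zero_add]

private lemma eta_eq_one_iff {t : W} (ht : cs.IsReflection t) (w : W) :
    eta cs w t = 1 ↔ cs.length (w * t) < cs.length w := by
  constructor
  · intro h
    obtain ⟨ω, hred, hw⟩ := cs.exists_reduced_word' w
    rw [hw, eta_count] at h
    have hmem : t ∈ cs.rightInvSeq ω := by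
      by_contra hc
      rw [List.count_eq_zero_of_not_mem hc] at h
      simp at h
    have := cs.isRightInversion_of_mem_rightInvSeq hred hmem
    rw [← hw] at this
    exact this.2
  · intro h
    rcases zmod2_cases (eta cs w t) with h0 | h1
    · exfalso
      have hwt : eta cs (w * t) t = eta cs t t + eta cs w (t * t * t⁻¹) := eta_mul ..
      have htt : t * t * t⁻¹ = t := by group
      rw [htt, eta_self cs ht, h0, add_zero] at hwt
      obtain ⟨ω, hred, hw⟩ := cs.exists_reduced_word' (w * t)
      rw [hw, eta_count] at hwt
      have hmem : t ∈ cs.rightInvSeq ω := by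
        by_contra hc
        rw [List.count_eq_zero_of_not_mem hc] at hwt
        simp at hwt
      have hinv := cs.isRightInversion_of_mem_rightInvSeq hred hmem
      have hlt := hinv.2
      rw [← hw] at hlt
      rw [show w * t * t = w by rw [mul_assoc, ht.mul_self, mul_one]] at hlt
      omega
    · exact h1

private lemma eraseIdx_append_left {α : Type*} :
    ∀ (l l' : List α) (k : ℕ), k < l.length →
      (l ++ l').eraseIdx k = l.eraseIdx k ++ l' := by
  intro l
  induction l with
  | nil => intro l' k hk; simp at hk
  | cons a l ih =>
    intro l' k hk
    cases k with
    | zero => simp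
    | succ k =>
      simp only [List.cons_append, List.eraseIdx_cons_succ, List.cons_append]
      rw [ih l' k (by simpa using hk)]

private lemma eraseIdx_append_length {α : Type*} :
    ∀ (l : List α) (a : α), (l ++ [a]).eraseIdx l.length = l := by
  intro l
  induction l with
  | nil => intro a; simp
  | cons b l ih => intro a; simp [ih a]

/-- Exchange property for a simple reflection acting on the left. -/
private lemma left_exchange {j : B} {w : W} {ω : List B}
    (h : cs.length (cs.simple j * w) < cs.length w)
    (hred : cs.IsReduced ω) (hw : w = cs.wordProd ω) :
    ∃ k < ω.length, cs.simple j * w = cs.wordProd (ω.eraseIdx k) := by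
  have hrev : cs.wordProd ω.reverse = w⁻¹ := by rw [cs.wordProd_reverse, ← hw]
  have hredrev : cs.IsReduced ω.reverse := (cs.isReduced_reverse_iff ω).mpr hred
  have hlen : cs.length (w⁻¹ * cs.simple j) < cs.length w⁻¹ := by
    have h1 : (w⁻¹ * cs.simple j)⁻¹ = cs.simple j * w := by
      rw [mul_inv_rev, cs.inv_simple, inv_inv]
    have h2 : cs.length (w⁻¹ * cs.simple j) = cs.length (cs.simple j * w) := by
      rw [← cs.length_inv, h1]
    rw [h2, cs.length_inv]
    exact h
  have heta : eta cs w⁻¹ (cs.simple j) = 1 :=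
    (eta_eq_one_iff cs (cs.isReflection_simple j) w⁻¹).mpr hlen
  rw [← hrev, eta_count] at heta
  have hmem : cs.simple j ∈ cs.rightInvSeq ω.reverse := by
    by_contra hc
    rw [List.count_eq_zero_of_not_mem hc] at heta
    simp at heta
  rw [cs.rightInvSeq_reverse, List.mem_reverse] at hmem
  obtain ⟨k, hk, hget⟩ := List.mem_iff_getElem.mp hmem
  rw [cs.length_leftInvSeq] at hk
  refine ⟨k, hk, ?_⟩
  have := cs.getD_leftInvSeq_mul_wordProd ω k
  rw [List.getD_eq_getElem _ 1 (by rwa [cs.length_leftInvSeq]), hget] at this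
  rw [hw, this]

/-- The key dichotomy: if `s_j` is a left descent and `s_i` a right descent of `w`, then
either `s_j w = w s_i`, or `ℓ(s_j w s_i) = ℓ(w) - 2`. -/
private lemma descent_dichotomy {i j : B} {w : W}
    (hj : cs.length (cs.simple j * w) < cs.length w)
    (hi : cs.length (w * cs.simple i) < cs.length w) :
    cs.simple j * w = w * cs.simple i ∨
      cs.length (cs.simple j * w * cs.simple i) + 2 ≤ cs.length w := by
  obtain ⟨ω', hred', hval⟩ := cs.exists_reduced_word' (w * cs.simple i)
  have hws : cs.length (w * cs.simple i) + 1 = cs.length w := cs.isRightDescent_iff.mp hi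
  have hπ : cs.wordProd (ω' ++ [i]) = w := by
    rw [cs.wordProd_append, cs.wordProd_singleton, ← hval, mul_assoc,
      cs.simple_mul_simple_self, mul_one]
  have hlen : (ω' ++ [i]).length = cs.length w := by
    have : ω'.length = cs.length (w * cs.simple i) := by
      rw [hval]; exact hred'.symm
    simp [this]; omega
  have hred : cs.IsReduced (ω' ++ [i]) := by
    unfold CoxeterSystem.IsReduced
    rw [hπ, hlen]
  obtain ⟨k, hk, hkeq⟩ := left_exchange cs hj hred hπ.symm
  rcases lt_or_ge k ω'.length with hlt | hge
  · right
    rw [eraseIdx_append_left ω' [i] k hlt] at hkeq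
    have : cs.simple j * w * cs.simple i = cs.wordProd (ω'.eraseIdx k) := by
      rw [hkeq, cs.wordProd_append, cs.wordProd_singleton, mul_assoc,
        cs.simple_mul_simple_self, mul_one]
    have hlb : cs.length (cs.wordProd (ω'.eraseIdx k)) ≤ (ω'.eraseIdx k).length :=
      cs.length_wordProd_le _
    have h9 : (ω'.eraseIdx k).length + 1 = ω'.length :=
      List.length_eraseIdx_add_one hlt
    have h10 : ω'.length = cs.length (w * cs.simple i) := by
      rw [hval]; exact hred'.symm
    rw [this]
    omega
  · left
    have hkeq' : k = ω'.length := by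
      simp only [List.length_append, List.length_singleton] at hk
      omega
    rw [hkeq', eraseIdx_append_length ω' i] at hkeq
    rw [hkeq, ← hval]

/-- The key property of biHecke monoid elements: they map covers of the left weak order to
covers or equalities, labelled by the same simple reflection. -/
private def GoodOp (f : W → W) : Prop :=
  ∀ (u : W) (j : B), cs.length (cs.simple j * u) = cs.length u + 1 →
    f (cs.simple j * u) = f u ∨
      (f (cs.simple j * u) = cs.simple j * f u ∧
        cs.length (cs.simple j * f u) = cs.length (f u) + 1)

private lemma goodOp_id : GoodOp cs id := by
  intro u j h
  right
  exact ⟨rfl, h⟩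

private lemma goodOp_comp {f g : W → W} (hf : GoodOp cs f) (hg : GoodOp cs g) :
    GoodOp cs (fun x => f (g x)) := by
  intro u j h
  rcases hg u j h with h1 | ⟨h1, h2⟩
  · left
    show f (g (cs.simple j * u)) = f (g u)
    rw [h1]
  · rcases hf (g u) j h2 with h3 | ⟨h3, h4⟩
    · left
      show f (g (cs.simple j * u)) = f (g u)
      rw [h1, h3]
    · right
      refine ⟨?_, h4⟩
      show f (g (cs.simple j * u)) = cs.simple j * f (g u)
      rw [h1, h3]

private lemma goodOp_piOp (i : B) : GoodOp cs (piOp cs i) := by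
  intro u j h
  set v := cs.simple j * u with hv
  by_cases hdu : cs.IsRightDescent u i <;> by_cases hdv : cs.IsRightDescent v i
  · -- both descents: πᵢ fixes both
    right
    rw [piOp, if_pos hdv, piOp, if_pos hdu]
    exact ⟨rfl, h⟩
  · -- descent of u but not of v: impossible
    exfalso
    have h1 : cs.length (v * cs.simple i) = cs.length v + 1 :=
      cs.not_isRightDescent_iff.mp hdv
    have h2 : cs.length (u * cs.simple i) + 1 = cs.length u := cs.isRightDescent_iff.mp hdu
    have h3 : v * cs.simple i = cs.simple j * (u * cs.simple i) := by rw [hv]; group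
    have h4 : cs.length (cs.simple j * (u * cs.simple i)) ≤ 1 + cs.length (u * cs.simple i) := by
      have := cs.length_mul_le (cs.simple j) (u * cs.simple i)
      rwa [cs.length_simple] at this
    rw [h3] at h1
    omega
  · -- descent of v but not of u
    have hjv : cs.length (cs.simple j * v) < cs.length v := by
      rw [hv, ← mul_assoc, cs.simple_mul_simple_self, one_mul, ← hv]
      omega
    rcases descent_dichotomy cs hjv hdv with heq | hbad
    · -- s_j v = v s_i, i.e. v = u s_i
      left
      rw [hv, ← mul_assoc, cs.simple_mul_simple_self, one_mul] at heq
      -- heq : u = v * s_i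
      rw [piOp, if_pos hdv, piOp, if_neg hdu]
      rw [heq, mul_assoc, cs.simple_mul_simple_self, mul_one]
    · exfalso
      have h1 : cs.simple j * v * cs.simple i = u * cs.simple i := by
        rw [hv, ← mul_assoc, cs.simple_mul_simple_self, one_mul]
      have h2 : cs.length (u * cs.simple i) = cs.length u + 1 :=
        cs.not_isRightDescent_iff.mp hdu
      rw [h1, h2] at hbad
      omega
  · -- neither
    right
    rw [piOp, if_neg hdv, piOp, if_neg hdu]
    constructor
    · rw [hv]; group
    · have h1 : cs.length (v * cs.simple i) = cs.length v + 1 :=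
        cs.not_isRightDescent_iff.mp hdv
      have h2 : cs.length (u * cs.simple i) = cs.length u + 1 :=
        cs.not_isRightDescent_iff.mp hdu
      have h3 : cs.simple j * (u * cs.simple i) = v * cs.simple i := by rw [hv]; group
      rw [h3, h1, h2, h]

private lemma goodOp_pibOp (i : B) : GoodOp cs (pibOp cs i) := by
  intro u j h
  set v := cs.simple j * u with hv
  by_cases hdu : cs.IsRightDescent u i <;> by_cases hdv : cs.IsRightDescent v i
  · -- both descents
    right
    rw [pibOp, if_pos hdv, pibOp, if_pos hdu]
    constructor
    · rw [hv]; group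
    · have h1 : cs.length (v * cs.simple i) + 1 = cs.length v := cs.isRightDescent_iff.mp hdv
      have h2 : cs.length (u * cs.simple i) + 1 = cs.length u := cs.isRightDescent_iff.mp hdu
      have h3 : cs.simple j * (u * cs.simple i) = v * cs.simple i := by rw [hv]; group
      rw [h3]
      omega
  · -- descent of u but not of v: impossible
    exfalso
    have h1 : cs.length (v * cs.simple i) = cs.length v + 1 :=
      cs.not_isRightDescent_iff.mp hdv
    have h2 : cs.length (u * cs.simple i) + 1 = cs.length u := cs.isRightDescent_iff.mp hdu
    have h3 : v * cs.simple i = cs.simple j * (u * cs.simple i) := by rw [hv]; group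
    have h4 : cs.length (cs.simple j * (u * cs.simple i)) ≤ 1 + cs.length (u * cs.simple i) := by
      have := cs.length_mul_le (cs.simple j) (u * cs.simple i)
      rwa [cs.length_simple] at this
    rw [h3] at h1
    omega
  · -- descent of v but not of u
    have hjv : cs.length (cs.simple j * v) < cs.length v := by
      rw [hv, ← mul_assoc, cs.simple_mul_simple_self, one_mul, ← hv]
      omega
    rcases descent_dichotomy cs hjv hdv with heq | hbad
    · left
      rw [hv, ← mul_assoc, cs.simple_mul_simple_self, one_mul] at heq
      rw [pibOp, if_pos hdv, pibOp, if_neg hdu]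
      rw [← heq]
    · exfalso
      have h1 : cs.simple j * v * cs.simple i = u * cs.simple i := by
        rw [hv, ← mul_assoc, cs.simple_mul_simple_self, one_mul]
      have h2 : cs.length (u * cs.simple i) = cs.length u + 1 :=
        cs.not_isRightDescent_iff.mp hdu
      rw [h1, h2] at hbad
      omega
  · -- neither
    right
    rw [pibOp, if_neg hdv, pibOp, if_neg hdu]
    exact ⟨rfl, h⟩

private lemma biHecke_goodOp {f : Function.End W} (hf : f ∈ biHecke cs) :
    GoodOp cs f := by
  induction hf using Submonoid.closure_induction with
  | mem x hx =>
    rcases hx with ⟨i, rfl⟩ | ⟨i, rfl⟩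
    · exact goodOp_piOp cs i
    · exact goodOp_pibOp cs i
  | one => exact goodOp_id cs
  | mul x y hx hy hgx hgy => exact goodOp_comp cs (f := x) (g := y) hgx hgy

/-! ### Left weak order basics -/

private lemma leL_refl (u : W) : leL cs u u := by
  unfold leL
  simp

private lemma leL_one (u : W) : leL cs 1 u := by
  unfold leL
  simp

private lemma leL_trans {u x v : W} (h1 : leL cs u x) (h2 : leL cs x v) : leL cs u v := by
  unfold leL at *
  have ha : cs.length (v * u⁻¹) ≤ cs.length (v * x⁻¹) + cs.length (x * u⁻¹) := by
    have := cs.length_mul_le (v * x⁻¹) (x * u⁻¹)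
    rwa [show v * x⁻¹ * (x * u⁻¹) = v * u⁻¹ by group] at this
  have hb : cs.length v ≤ cs.length (v * u⁻¹) + cs.length u := by
    have := cs.length_mul_le (v * u⁻¹) u
    rwa [show v * u⁻¹ * u = v by group] at this
  omega

private lemma leL_length {u v : W} (h : leL cs u v) : cs.length u ≤ cs.length v := by
  unfold leL at h
  omega

private lemma leL_antisymm_of_length {u v : W} (h : leL cs u v)
    (hl : cs.length v ≤ cs.length u) : u = v := by
  unfold leL at h
  have : cs.length (v * u⁻¹) = 0 := by omega
  have h1 : v * u⁻¹ = 1 := cs.length_eq_zero_iff.mp this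
  have := mul_inv_eq_one.mp h1
  exact this.symm

/-- Going one step up in left weak order below `v`. -/
private lemma leL_step_up {u v : W} (h : leL cs u v) (hne : u ≠ v) :
    ∃ j : B, cs.length (cs.simple j * u) = cs.length u + 1 ∧ leL cs (cs.simple j * u) v := by
  set z := v * u⁻¹ with hz
  have hzne : z ≠ 1 := by
    intro hc
    exact hne (mul_inv_eq_one.mp hc).symm
  obtain ⟨j, hj⟩ := cs.exists_rightDescent_of_ne_one hzne
  have hjz : cs.length (z * cs.simple j) + 1 = cs.length z := cs.isRightDescent_iff.mp hj
  have hlen : cs.length z + cs.length u = cs.length v := h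
  have hvdecomp : (z * cs.simple j) * (cs.simple j * u) = v := by
    rw [show z * cs.simple j * (cs.simple j * u) = z * (cs.simple j * cs.simple j) * u by
      group, cs.simple_mul_simple_self, mul_one, hz]
    group
  have hup : cs.length (cs.simple j * u) = cs.length u + 1 := by
    have hle : cs.length (cs.simple j * u) ≤ 1 + cs.length u := by
      have := cs.length_mul_le (cs.simple j) u
      rwa [cs.length_simple] at this
    have hge : cs.length v ≤ cs.length (z * cs.simple j) + cs.length (cs.simple j * u) := by
      have := cs.length_mul_le (z * cs.simple j) (cs.simple j * u)
      rwa [hvdecomp] at this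
    omega
  refine ⟨j, hup, ?_⟩
  unfold leL
  have harg : v * (cs.simple j * u)⁻¹ = z * cs.simple j := by
    rw [mul_inv_rev, cs.inv_simple, hz]
    group
  rw [harg, hup]
  omega

/-- Going one step down in left weak order above `a`. -/
private lemma leL_step_down {a x : W} (h : leL cs a x) (hne : a ≠ x) :
    ∃ (j : B) (y : W), x = cs.simple j * y ∧ cs.length x = cs.length y + 1 ∧
      leL cs a y ∧ leL cs y x := by
  set z := x * a⁻¹ with hz
  have hzne : z ≠ 1 := by
    intro hc
    exact hne (mul_inv_eq_one.mp hc).symm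
  obtain ⟨j, hj⟩ := cs.exists_leftDescent_of_ne_one hzne
  have hjz : cs.length (cs.simple j * z) + 1 = cs.length z := cs.isLeftDescent_iff.mp hj
  have hlen : cs.length z + cs.length a = cs.length x := h
  refine ⟨j, cs.simple j * x, ?_, ?_, ?_, ?_⟩
  · rw [← mul_assoc, cs.simple_mul_simple_self, one_mul]
  · have hle : cs.length (cs.simple j * x) ≤ 1 + cs.length x := by
      have := cs.length_mul_le (cs.simple j) x
      rwa [cs.length_simple] at this
    have hdecomp : (cs.simple j * z) * a = cs.simple j * x := by rw [hz]; group
    have hge : cs.length (cs.simple j * x) ≤ cs.length (cs.simple j * z) + cs.length a := by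
      have := cs.length_mul_le (cs.simple j * z) a
      rwa [hdecomp] at this
    have hdi : cs.length (cs.simple j * x) = cs.length x + 1 ∨
        cs.length (cs.simple j * x) + 1 = cs.length x := cs.length_simple_mul x j
    omega
  · unfold leL
    have harg : cs.simple j * x * a⁻¹ = cs.simple j * z := by rw [hz]; group
    rw [harg]
    have hy : cs.length (cs.simple j * x) + 1 = cs.length x := by
      have hle : cs.length (cs.simple j * x) ≤ 1 + cs.length x := by
        have := cs.length_mul_le (cs.simple j) x
        rwa [cs.length_simple] at this
      have hdecomp : (cs.simple j * z) * a = cs.simple j * x := by rw [hz]; group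
      have hge : cs.length (cs.simple j * x) ≤ cs.length (cs.simple j * z) + cs.length a := by
        have := cs.length_mul_le (cs.simple j * z) a
        rwa [hdecomp] at this
      have hdi : cs.length (cs.simple j * x) = cs.length x + 1 ∨
          cs.length (cs.simple j * x) + 1 = cs.length x := cs.length_simple_mul x j
      omega
    omega
  · unfold leL
    have harg : x * (cs.simple j * x)⁻¹ = cs.simple j := by
      rw [mul_inv_rev, cs.inv_simple]
      group
    rw [harg, cs.length_simple]
    have hy : cs.length (cs.simple j * x) + 1 = cs.length x := by
      have hle : cs.length (cs.simple j * x) ≤ 1 + cs.length x := by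
        have := cs.length_mul_le (cs.simple j) x
        rwa [cs.length_simple] at this
      have hdecomp : (cs.simple j * z) * a = cs.simple j * x := by rw [hz]; group
      have hge : cs.length (cs.simple j * x) ≤ cs.length (cs.simple j * z) + cs.length a := by
        have := cs.length_mul_le (cs.simple j * z) a
        rwa [hdecomp] at this
      have hdi : cs.length (cs.simple j * x) = cs.length x + 1 ∨
          cs.length (cs.simple j * x) + 1 = cs.length x := cs.length_simple_mul x j
      omega
    omega

/-- A `GoodOp` function is monotone and contracting for left weak order. -/
private lemma goodOp_mono_aux {f : W → W} (hf : GoodOp cs f) :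
    ∀ (n : ℕ) (u v : W), cs.length v ≤ cs.length u + n → leL cs u v →
      leL cs (f u) (f v) ∧ cs.length (f v) + cs.length u ≤ cs.length (f u) + cs.length v := by
  intro n
  induction n with
  | zero =>
    intro u v hn hle
    have : u = v := leL_antisymm_of_length cs hle (by omega)
    subst this
    exact ⟨leL_refl cs _, by omega⟩
  | succ n ih =>
    intro u v hn hle
    by_cases hne : u = v
    · subst hne
      exact ⟨leL_refl cs _, by omega⟩
    · obtain ⟨j, hj, hle'⟩ := leL_step_up cs hle hne
      have hlen' : cs.length v ≤ cs.length (cs.simple j * u) + n := by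
        have := leL_length cs hle'
        omega
      have ihres := ih (cs.simple j * u) v hlen' hle'
      rcases hf u j hj with heq | ⟨heq, hcov⟩
      · rw [heq] at ihres
        exact ⟨ihres.1, by omega⟩
      · have hcovle : leL cs (f u) (f (cs.simple j * u)) := by
          unfold leL
          rw [heq]
          have harg : cs.simple j * f u * (f u)⁻¹ = cs.simple j := by group
          rw [harg, cs.length_simple, hcov]
          omega
        refine ⟨leL_trans cs hcovle ihres.1, ?_⟩
        have h1 := ihres.2
        rw [heq, hcov] at h1
        omega

private lemma goodOp_mono {f : W → W} (hf : GoodOp cs f) {u v : W} (h : leL cs u v) :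
    leL cs (f u) (f v) ∧ cs.length (f v) + cs.length u ≤ cs.length (f u) + cs.length v :=
  goodOp_mono_aux cs hf (cs.length v) u v (by omega) h

/-- If `w₀` has maximal length, then `ℓ(w₀ u) + ℓ(u) = ℓ(w₀)` for all `u`. -/
private lemma longest_mul_length {w₀ : W} (hmax : ∀ u : W, cs.length u ≤ cs.length w₀) :
    ∀ u : W, cs.length (w₀ * u) + cs.length u = cs.length w₀ := by
  have key : ∀ (n : ℕ) (u : W), cs.length u ≤ n →
      cs.length (w₀ * u) + cs.length u = cs.length w₀ := by
    intro n
    induction n with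
    | zero =>
      intro u hu
      have : u = 1 := cs.length_eq_zero_iff.mp (by omega)
      subst this
      simp
    | succ n ih =>
      intro u hu
      by_cases h1 : u = 1
      · subst h1; simp
      · obtain ⟨i, hdi⟩ := cs.exists_rightDescent_of_ne_one h1
        have hdi' : cs.length (u * cs.simple i) + 1 = cs.length u := cs.isRightDescent_iff.mp hdi
        set u' := u * cs.simple i with hu'
        have ihu' : cs.length (w₀ * u') + cs.length u' = cs.length w₀ := ih u' (by omega)
        have hu'u : u' * cs.simple i = u := by
          rw [hu', mul_assoc, cs.simple_mul_simple_self, mul_one]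
        -- `i` is a right descent of `w₀ * u'`
        have heta : eta cs (w₀ * u') (cs.simple i) = 1 := by
          have hm := eta_mul cs w₀ u' (cs.simple i)
          have h2 : eta cs u' (cs.simple i) = 0 := by
            rcases zmod2_cases (eta cs u' (cs.simple i)) with h0 | hone
            · exact h0
            · exfalso
              have := (eta_eq_one_iff cs (cs.isReflection_simple i) u').mp hone
              rw [hu'u] at this
              omega
          have hrefl : cs.IsReflection (u' * cs.simple i * u'⁻¹) :=
            (cs.isReflection_simple i).conj u'
          have h3 : eta cs w₀ (u' * cs.simple i * u'⁻¹) = 1 := by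
            apply (eta_eq_one_iff cs hrefl w₀).mpr
            have hne := hrefl.length_mul_left_ne w₀
            have hle := hmax (w₀ * (u' * cs.simple i * u'⁻¹))
            omega
          rw [h2, h3, zero_add] at hm
          exact hm
        have hdesc : cs.length (w₀ * u' * cs.simple i) < cs.length (w₀ * u') := by
          have := (eta_eq_one_iff cs (cs.isReflection_simple i) (w₀ * u')).mp heta
          exact this
        have hw0u : w₀ * u = w₀ * u' * cs.simple i := by
          rw [← hu'u]; group
        have hdesc' : cs.length (w₀ * u' * cs.simple i) + 1 = cs.length (w₀ * u') := by
          have hdi2 : cs.IsRightDescent (w₀ * u') i := hdesc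
          exact cs.isRightDescent_iff.mp hdi2
        rw [hw0u]
        omega
  intro u
  exact key (cs.length u) u (le_refl _)

private lemma leL_longest {w₀ : W} (hmax : ∀ u : W, cs.length u ≤ cs.length w₀) (u : W) :
    leL cs u w₀ := by
  unfold leL
  have := longest_mul_length cs hmax u⁻¹
  rwa [cs.length_inv] at this

end BiHeckeAux

/-- The image set of any idempotent of the biHecke monoid is an interval in left weak order. -/
theorem biHecke_idempotent_image_interval {B W : Type*} [Group W] [Finite W]
    {M : CoxeterMatrix B} (cs : CoxeterSystem M W) (f : Function.End W)
    (hf : f ∈ biHecke cs) (hidem : IsIdempotentElem f) :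
    ∃ a b : W, Set.range f = {x : W | leL cs a x ∧ leL cs x b} := by
  have hgood : GoodOp cs f := biHecke_goodOp cs hf
  have hfix : ∀ x : W, f (f x) = f x := fun x => congrFun hidem x
  obtain ⟨w₀, hmax⟩ := Finite.exists_max cs.length
  set a := f 1 with ha
  set b := f w₀ with hb
  have hfa : f a = a := hfix 1
  have hfb : f b = b := hfix w₀
  refine ⟨a, b, ?_⟩
  ext x
  simp only [Set.mem_range, Set.mem_setOf_eq]
  constructor
  · rintro ⟨y, rfl⟩
    constructor
    · exact (goodOp_mono cs hgood (leL_one cs y)).1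
    · exact (goodOp_mono cs hgood (leL_longest cs hmax y)).1
  · rintro ⟨hax, hxb⟩
    suffices h : f x = x by exact ⟨x, h⟩
    have key : ∀ (n : ℕ) (x : W), cs.length x ≤ n → leL cs a x → leL cs x b → f x = x := by
      intro n
      induction n with
      | zero =>
        intro x hx hax hxb
        have hx1 : x = 1 := cs.length_eq_zero_iff.mp (by omega)
        subst hx1
        have ha1 : a = 1 := by
          have := leL_length cs hax
          exact cs.length_eq_zero_iff.mp (by omega)
        rw [← ha1]
        exact hfa
      | succ n ih =>
        intro x hx hax hxb
        by_cases hxa : a = x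
        · rw [← hxa]; exact hfa
        · obtain ⟨j, y, hxy, hlxy, hay, hyx⟩ := leL_step_down cs hax hxa
          have hyb : leL cs y b := leL_trans cs hyx hxb
          have hfy : f y = y := ih y (by omega) hay hyb
          have hsy : cs.length (cs.simple j * y) = cs.length y + 1 := by
            rw [← hxy]; omega
          rcases hgood y j hsy with heq | ⟨heq, _⟩
          · -- f x = f y = y : contradiction with x ≤_L b
            exfalso
            rw [← hxy, hfy] at heq
            have hmono := (goodOp_mono cs hgood hxb).2
            rw [hfb, heq] at hmono
            omega
          · rw [← hxy, hfy] at heq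
            rw [heq, hxy]
    exact key (cs.length x) x (le_refl _) hax hxb
end

section
/- Any element of the biHecke monoid is uniquely determined by its fibers and its image set: if f, g ∈ M(W) have the same partition of W into fibers and the same image set, then f = g. -/
open scoped Classical

namespace BiHeckeAux

open CoxeterSystem List

variable {B W : Type*} [Group W] {M : CoxeterMatrix B} (cs : CoxeterSystem M W)

lemma conj_cancel (j : B) (u : W) :
    cs.simple j * (cs.simple j * u * cs.simple j) * cs.simple j = u := by
  rw [mul_assoc (cs.simple j) u, cs.simple_mul_simple_cancel_left,
    cs.simple_mul_simple_cancel_right]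

lemma conj_eq_simple_iff (j i : B) (t : W) :
    cs.simple j * t * cs.simple j = cs.simple i
      ↔ t = (cs.simple j * cs.simple i) ^ 1 * cs.simple j := by
  rw [pow_one]
  constructor
  · intro h
    have h' : cs.simple j * (cs.simple j * t * cs.simple j) * cs.simple j
        = cs.simple j * cs.simple i * cs.simple j := by rw [h]
    rw [conj_cancel] at h'
    exact h'
  · intro h
    rw [h]
    exact conj_cancel cs j (cs.simple i)

/-- The sign cocycle operator on `W × ℤˣ`. -/
noncomputable def etaFun (i : B) : W × ℤˣ → W × ℤˣ :=
  fun p => (cs.simple i * p.1 * cs.simple i, if p.1 = cs.simple i then -p.2 else p.2)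

lemma etaFun_involutive (i : B) : Function.Involutive (etaFun cs i) := by
  rintro ⟨t, ε⟩
  simp only [etaFun]
  by_cases h : t = cs.simple i
  · subst h
    have h3 : cs.simple i * cs.simple i * cs.simple i = cs.simple i := by
      rw [cs.simple_mul_simple_self, one_mul]
    rw [if_pos rfl, if_pos h3, conj_cancel, neg_neg]
  · have h2 : cs.simple i * t * cs.simple i ≠ cs.simple i := by
      intro hc
      apply h
      have h' : cs.simple i * (cs.simple i * t * cs.simple i) * cs.simple i
          = cs.simple i * cs.simple i * cs.simple i := by rw [hc]
      rw [conj_cancel] at h'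
      rw [h', cs.simple_mul_simple_self, one_mul]
    rw [if_neg h, if_neg h2, conj_cancel]

/-- The sign cocycle permutation. -/
noncomputable def eta (i : B) : Equiv.Perm (W × ℤˣ) := (etaFun_involutive cs i).toPerm

@[simp] lemma eta_apply (i : B) (t : W) (ε : ℤˣ) :
    eta cs i (t, ε) = (cs.simple i * t * cs.simple i,
      if t = cs.simple i then -ε else ε) := rfl

lemma eta_mul_pow_apply (i j : B) (p : ℕ) (t : W) (ε : ℤˣ) :
    ((eta cs i * eta cs j) ^ p) (t, ε) =
      ((cs.simple i * cs.simple j) ^ p * t * (cs.simple j * cs.simple i) ^ p,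
        ε * ∏ m ∈ Finset.range (2 * p),
          (if t = (cs.simple j * cs.simple i) ^ m * cs.simple j then (-1 : ℤˣ) else 1)) := by
  induction p generalizing t ε with
  | zero => simp
  | succ p ih =>
    rw [pow_succ, Equiv.Perm.mul_apply]
    have happ : (eta cs i * eta cs j) (t, ε) =
        ((cs.simple i * cs.simple j) * t * (cs.simple j * cs.simple i),
          ε * ((if t = (cs.simple j * cs.simple i) ^ 0 * cs.simple j then (-1 : ℤˣ) else 1)
            * (if t = (cs.simple j * cs.simple i) ^ 1 * cs.simple j then (-1 : ℤˣ) else 1))) := by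
      rw [Equiv.Perm.mul_apply, eta_apply, eta_apply, Prod.mk.injEq]
      constructor
      · simp [mul_assoc]
      · simp only [conj_eq_simple_iff cs j i t, pow_zero, one_mul]
        by_cases h2 : t = (cs.simple j * cs.simple i) ^ 1 * cs.simple j
        · rw [if_pos h2, if_pos h2]
          by_cases h1 : t = cs.simple j
          · rw [if_pos h1, if_pos h1, neg_neg]
            simp
          · rw [if_neg h1, if_neg h1]
            simp
        · rw [if_neg h2, if_neg h2]
          by_cases h1 : t = cs.simple j
          · rw [if_pos h1, if_pos h1]
            simp
          · rw [if_neg h1, if_neg h1]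
            simp
    rw [happ, ih, Prod.mk.injEq]
    constructor
    · rw [pow_succ (cs.simple i * cs.simple j) p, pow_succ' (cs.simple j * cs.simple i) p]
      simp only [mul_assoc]
    · have hshift : ∀ m : ℕ,
          ((cs.simple i * cs.simple j) * t * (cs.simple j * cs.simple i)
            = (cs.simple j * cs.simple i) ^ m * cs.simple j)
          ↔ (t = (cs.simple j * cs.simple i) ^ (m + 1 + 1) * cs.simple j) := by
        intro m
        have e2 : (cs.simple i * cs.simple j) * (cs.simple j * cs.simple i) ^ (m + 1 + 1)
            = (cs.simple j * cs.simple i) ^ (m + 1) := by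
          rw [pow_succ' (cs.simple j * cs.simple i) (m + 1), ← mul_assoc]
          have hone : (cs.simple i * cs.simple j) * (cs.simple j * cs.simple i) = 1 := by
            rw [mul_assoc, ← mul_assoc (cs.simple j), cs.simple_mul_simple_self, one_mul,
              cs.simple_mul_simple_self]
          rw [hone, one_mul]
        have e3 : cs.simple j * (cs.simple j * cs.simple i) = cs.simple i := by
          rw [← mul_assoc, cs.simple_mul_simple_self, one_mul]
        have e4 : (cs.simple j * cs.simple i) * cs.simple i = cs.simple j := by
          rw [mul_assoc, cs.simple_mul_simple_self, mul_one]
        have key : (cs.simple i * cs.simple j) *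
            ((cs.simple j * cs.simple i) ^ (m + 1 + 1) * cs.simple j) * (cs.simple j * cs.simple i)
            = (cs.simple j * cs.simple i) ^ m * cs.simple j := by
          calc (cs.simple i * cs.simple j) *
              ((cs.simple j * cs.simple i) ^ (m + 1 + 1) * cs.simple j) * (cs.simple j * cs.simple i)
              = ((cs.simple i * cs.simple j) * (cs.simple j * cs.simple i) ^ (m + 1 + 1))
                * (cs.simple j * (cs.simple j * cs.simple i)) := by
                  simp only [mul_assoc]
            _ = (cs.simple j * cs.simple i) ^ (m + 1) * cs.simple i := by rw [e2, e3]
            _ = (cs.simple j * cs.simple i) ^ m * ((cs.simple j * cs.simple i) * cs.simple i) := by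
                  rw [pow_succ, mul_assoc]
            _ = (cs.simple j * cs.simple i) ^ m * cs.simple j := by rw [e4]
        constructor
        · intro h
          rw [← key] at h
          exact mul_left_cancel (mul_right_cancel h)
        · intro h
          rw [h, key]
      have hg : ∀ m ∈ Finset.range (2 * p),
          (if ((cs.simple i * cs.simple j) * t * (cs.simple j * cs.simple i)
              = (cs.simple j * cs.simple i) ^ m * cs.simple j) then (-1 : ℤˣ) else 1)
          = (if t = (cs.simple j * cs.simple i) ^ (m + 1 + 1) * cs.simple j then (-1 : ℤˣ) else 1) :=
        fun m _ => if_congr (hshift m) rfl rfl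
      rw [Finset.prod_congr rfl hg]
      have hsplit : (∏ m ∈ Finset.range (2 * (p + 1)),
            (if t = (cs.simple j * cs.simple i) ^ m * cs.simple j then (-1 : ℤˣ) else 1))
          = ((if t = (cs.simple j * cs.simple i) ^ 0 * cs.simple j then (-1 : ℤˣ) else 1)
              * (if t = (cs.simple j * cs.simple i) ^ 1 * cs.simple j then (-1 : ℤˣ) else 1))
            * ∏ m ∈ Finset.range (2 * p),
              (if t = (cs.simple j * cs.simple i) ^ (m + 1 + 1) * cs.simple j then (-1 : ℤˣ) else 1) := by
        rw [show 2 * (p + 1) = 2 * p + 1 + 1 by ring, Finset.prod_range_succ',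
          Finset.prod_range_succ']
        rw [show (0 : ℕ) + 1 = 1 from rfl]
        ac_rfl
      rw [hsplit, mul_assoc]

lemma eta_liftable : M.IsLiftable (fun i => (eta cs i : Equiv.Perm (W × ℤˣ))) := by
  intro i j
  show ((eta cs i) * (eta cs j)) ^ M i j = 1
  apply Equiv.ext
  rintro ⟨t, ε⟩
  rw [eta_mul_pow_apply]
  have hc : (cs.simple i * cs.simple j) ^ M i j = 1 := cs.simple_mul_simple_pow i j
  have hd : (cs.simple j * cs.simple i) ^ M i j = 1 := cs.simple_mul_simple_pow' i j
  have hsign : (∏ m ∈ Finset.range (2 * M i j),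
      (if t = (cs.simple j * cs.simple i) ^ m * cs.simple j then (-1 : ℤˣ) else 1)) = 1 := by
    rw [two_mul, Finset.prod_range_add]
    have hcongr : ∀ m ∈ Finset.range (M i j),
        (if t = (cs.simple j * cs.simple i) ^ (M i j + m) * cs.simple j then (-1 : ℤˣ) else 1)
        = (if t = (cs.simple j * cs.simple i) ^ m * cs.simple j then (-1 : ℤˣ) else 1) := by
      intro m _
      rw [pow_add, hd, one_mul]
    rw [Finset.prod_congr rfl hcongr]
    exact Int.units_mul_self _
  rw [hc, hd, hsign, one_mul, mul_one, mul_one]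
  rfl

/-- The sign representation `W →* Perm (W × ℤˣ)`. -/
noncomputable def phi : W →* Equiv.Perm (W × ℤˣ) :=
  cs.lift ⟨fun i => (eta cs i : Equiv.Perm (W × ℤˣ)), eta_liftable cs⟩

@[simp] lemma phi_simple (i : B) : phi cs (cs.simple i) = eta cs i :=
  cs.lift_apply_simple (eta_liftable cs) i

lemma phi_wordProd (ω : List B) (t : W) (ε : ℤˣ) :
    phi cs (cs.wordProd ω) (t, ε) =
      (cs.wordProd ω * t * (cs.wordProd ω)⁻¹,
        ε * (-1 : ℤˣ) ^ ((cs.rightInvSeq ω).count t)) := by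
  induction ω generalizing ε with
  | nil => simp
  | cons i ω ih =>
    rw [cs.wordProd_cons, map_mul, Equiv.Perm.mul_apply, ih, phi_simple, eta_apply]
    have hris : cs.rightInvSeq (i :: ω)
        = ((cs.wordProd ω)⁻¹ * cs.simple i * cs.wordProd ω) :: cs.rightInvSeq ω := rfl
    have hcond : (cs.wordProd ω * t * (cs.wordProd ω)⁻¹ = cs.simple i)
        ↔ (t = (cs.wordProd ω)⁻¹ * cs.simple i * cs.wordProd ω) := by
      constructor
      · intro h
        have h' : (cs.wordProd ω)⁻¹ * (cs.wordProd ω * t * (cs.wordProd ω)⁻¹) * cs.wordProd ω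
            = (cs.wordProd ω)⁻¹ * cs.simple i * cs.wordProd ω := by rw [h]
        simp only [← mul_assoc] at h'
        rw [inv_mul_cancel, one_mul, mul_assoc, inv_mul_cancel, mul_one] at h'
        exact h'
      · intro h
        rw [h]
        simp [mul_assoc]
    rw [Prod.mk.injEq]
    constructor
    · rw [mul_inv_rev, cs.inv_simple]
      simp [mul_assoc]
    · rw [hris, List.count_cons]
      by_cases h : t = (cs.wordProd ω)⁻¹ * cs.simple i * cs.wordProd ω
      · rw [if_pos (hcond.mpr h)]
        simp [h, pow_succ]
      · have hne : ¬ ((cs.wordProd ω)⁻¹ * cs.simple i * cs.wordProd ω = t) :=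
          fun hh => h hh.symm
        rw [if_neg (fun hc => h (hcond.mp hc))]
        simp [beq_iff_eq, hne]

/-- Parity of the number of occurrences of `t` in the right inversion sequence only
depends on the product of the word. -/
lemma count_parity {ω ω' : List B} (h : cs.wordProd ω = cs.wordProd ω') (t : W) :
    ((-1 : ℤˣ)) ^ ((cs.rightInvSeq ω).count t) = (-1 : ℤˣ) ^ ((cs.rightInvSeq ω').count t) := by
  have h1 := phi_wordProd cs ω t 1
  have h2 := phi_wordProd cs ω' t 1
  rw [h] at h1
  rw [h1] at h2
  have h3 := (Prod.ext_iff.mp h2).2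
  simpa using h3

/-- The right exchange property for simple reflections. -/
lemma rightExchange {w : W} {i : B} (hd : cs.IsRightDescent w i)
    {ω : List B} (hred : cs.IsReduced ω) (hω : cs.wordProd ω = w) :
    ∃ k, k < ω.length ∧ w * cs.simple i = cs.wordProd (ω.eraseIdx k) := by
  classical
  obtain ⟨ω₂, hω₂red, hω₂⟩ := cs.exists_reduced_word' (w * cs.simple i)
  have hlen1 : cs.length (w * cs.simple i) + 1 = cs.length w := (cs.isRightDescent_iff).mp hd
  set ω'' : List B := ω₂ ++ [i] with hω''def
  have hπ : cs.wordProd ω'' = w := by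
    rw [hω''def, cs.wordProd_append, ← hω₂]
    simp [cs.wordProd_cons, cs.simple_mul_simple_cancel_right]
  have hω₂len : cs.length (w * cs.simple i) = ω₂.length := by rw [hω₂]; exact hω₂red
  have hred'' : cs.IsReduced ω'' := by
    unfold CoxeterSystem.IsReduced
    rw [hπ, hω''def, List.length_append, List.length_singleton]
    omega
  have hmem : cs.simple i ∈ cs.rightInvSeq ω'' := by
    have := cs.rightInvSeq_concat ω₂ i
    rw [← List.concat_eq_append] at hω''def
    rw [hω''def, this]
    simp
  have hcount'' : (cs.rightInvSeq ω'').count (cs.simple i) = 1 :=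
    List.count_eq_one_of_mem (hred''.nodup_rightInvSeq) hmem
  have hpar := count_parity cs (hπ.trans hω.symm) (cs.simple i)
  rw [hcount''] at hpar
  have hcpos : (cs.rightInvSeq ω).count (cs.simple i) ≠ 0 := by
    intro hc
    rw [hc, pow_one, pow_zero] at hpar
    exact absurd hpar (by decide)
  have hmemω : cs.simple i ∈ cs.rightInvSeq ω := by
    by_contra hc
    exact hcpos (List.count_eq_zero.mpr hc)
  obtain ⟨k, hk, hget⟩ := List.mem_iff_getElem.mp hmemω
  rw [cs.length_rightInvSeq] at hk
  refine ⟨k, hk, ?_⟩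
  have := cs.wordProd_mul_getD_rightInvSeq ω k
  rw [List.getD_eq_getElem _ _ (by rwa [cs.length_rightInvSeq]), hget, hω] at this
  exact this

/-- The key exchange-type lemma: if `ℓ(s_j x) = ℓ(x)+1`, `ℓ(x s_i) = ℓ(x)+1` and
`s_j x s_i` is shorter than `s_j x`, then `s_j x = x s_i`. -/
lemma exchange_eq {x : W} {i j : B}
    (h1 : cs.length (cs.simple j * x) = cs.length x + 1)
    (h2 : cs.length (x * cs.simple i) = cs.length x + 1)
    (h3 : cs.length (cs.simple j * x * cs.simple i) < cs.length (cs.simple j * x)) :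
    cs.simple j * x = x * cs.simple i := by
  obtain ⟨ω, hredω, hxω⟩ := cs.exists_reduced_word' x
  have hxl : cs.length x = ω.length := by rw [hxω]; exact hredω
  have hredjω : cs.IsReduced (j :: ω) := by
    unfold CoxeterSystem.IsReduced
    rw [cs.wordProd_cons, ← hxω, h1, List.length_cons]
    omega
  have hπjω : cs.wordProd (j :: ω) = cs.simple j * x := by
    rw [cs.wordProd_cons, ← hxω]
  have hd : cs.IsRightDescent (cs.simple j * x) i := h3
  obtain ⟨k, hk, hke⟩ := rightExchange cs hd hredjω hπjω
  match k with
  | 0 =>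
    rw [List.eraseIdx_cons_zero, ← hxω] at hke
    calc cs.simple j * x = cs.simple j * x * cs.simple i * cs.simple i := by
          rw [cs.simple_mul_simple_cancel_right]
      _ = x * cs.simple i := by rw [hke]
  | k + 1 =>
    exfalso
    rw [List.eraseIdx_cons_succ, cs.wordProd_cons] at hke
    have hxsi : x * cs.simple i = cs.wordProd (ω.eraseIdx k) := by
      have h5 : cs.simple j * (x * cs.simple i) = cs.simple j * cs.wordProd (ω.eraseIdx k) := by
        rw [← mul_assoc]; exact hke
      exact mul_left_cancel h5
    have hlen : cs.length (x * cs.simple i) ≤ (ω.eraseIdx k).length := by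
      rw [hxsi]; exact cs.length_wordProd_le _
    have hklt : k < ω.length := by
      simpa using hk
    have hlen2 : (ω.eraseIdx k).length = ω.length - 1 := by
      rw [List.length_eraseIdx]
      simp [hklt]
    have hωlen : ω.length = cs.length x := by rw [← hredω, hxω]
    omega

/-- The covering relation along a simple left multiplication. -/
def Rel (j : B) (x y : W) : Prop :=
  y = x ∨ (y = cs.simple j * x ∧ cs.length (cs.simple j * x) = cs.length x + 1)

lemma piOp_pres (i j : B) {x y : W} (h : Rel cs j x y) :
    Rel cs j (piOp cs i x) (piOp cs i y) := by
  rcases h with rfl | ⟨rfl, hl⟩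
  · left; rfl
  by_cases dx : cs.IsRightDescent x i <;> by_cases dy : cs.IsRightDescent (cs.simple j * x) i
  · simp only [piOp, if_pos dx, if_pos dy]
    right; exact ⟨rfl, hl⟩
  · exfalso
    have e1 : cs.length (cs.simple j * x * cs.simple i) = cs.length (cs.simple j * x) + 1 :=
      (cs.not_isRightDescent_iff).mp dy
    have e2 : cs.length (x * cs.simple i) + 1 = cs.length x := (cs.isRightDescent_iff).mp dx
    have e3 : cs.length (cs.simple j * (x * cs.simple i)) ≤ cs.length (x * cs.simple i) + 1 := by
      rcases cs.length_simple_mul (x * cs.simple i) j with h' | h' <;> omega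
    rw [← mul_assoc] at e3
    omega
  · -- ¬dx, dy : use exchange_eq
    have e2 : cs.length (x * cs.simple i) = cs.length x + 1 :=
      (cs.not_isRightDescent_iff).mp dx
    have heq : cs.simple j * x = x * cs.simple i := exchange_eq cs hl e2 dy
    simp only [piOp, if_neg dx, if_pos dy]
    left; exact heq
  · -- ¬dx, ¬dy
    simp only [piOp, if_neg dx, if_neg dy]
    right
    constructor
    · rw [mul_assoc]
    · have e1 : cs.length (cs.simple j * x * cs.simple i) = cs.length (cs.simple j * x) + 1 :=
        (cs.not_isRightDescent_iff).mp dy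
      have e2 : cs.length (x * cs.simple i) = cs.length x + 1 :=
        (cs.not_isRightDescent_iff).mp dx
      rw [← mul_assoc]
      omega

lemma pibOp_pres (i j : B) {x y : W} (h : Rel cs j x y) :
    Rel cs j (pibOp cs i x) (pibOp cs i y) := by
  rcases h with rfl | ⟨rfl, hl⟩
  · left; rfl
  by_cases dx : cs.IsRightDescent x i <;> by_cases dy : cs.IsRightDescent (cs.simple j * x) i
  · simp only [pibOp, if_pos dx, if_pos dy]
    right
    constructor
    · rw [mul_assoc]
    · have e1 : cs.length (cs.simple j * x * cs.simple i) + 1 = cs.length (cs.simple j * x) :=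
        (cs.isRightDescent_iff).mp dy
      have e2 : cs.length (x * cs.simple i) + 1 = cs.length x := (cs.isRightDescent_iff).mp dx
      rw [← mul_assoc]
      omega
  · exfalso
    have e1 : cs.length (cs.simple j * x * cs.simple i) = cs.length (cs.simple j * x) + 1 :=
      (cs.not_isRightDescent_iff).mp dy
    have e2 : cs.length (x * cs.simple i) + 1 = cs.length x := (cs.isRightDescent_iff).mp dx
    have e3 : cs.length (cs.simple j * (x * cs.simple i)) ≤ cs.length (x * cs.simple i) + 1 := by
      rcases cs.length_simple_mul (x * cs.simple i) j with h' | h' <;> omega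
    rw [← mul_assoc] at e3
    omega
  · -- ¬dx, dy
    have e2 : cs.length (x * cs.simple i) = cs.length x + 1 :=
      (cs.not_isRightDescent_iff).mp dx
    have heq : cs.simple j * x = x * cs.simple i := exchange_eq cs hl e2 dy
    simp only [pibOp, if_neg dx, if_pos dy]
    left
    rw [heq, cs.simple_mul_simple_cancel_right]
  · simp only [pibOp, if_neg dx, if_neg dy]
    right; exact ⟨rfl, hl⟩

lemma biHecke_pres {f : Function.End W} (hf : f ∈ biHecke cs) :
    ∀ (j : B) (x y : W), Rel cs j x y → Rel cs j (f x) (f y) := by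
  induction hf using Submonoid.closure_induction with
  | mem g hg =>
    rcases hg with ⟨i, rfl⟩ | ⟨i, rfl⟩
    · intro j x y h; exact piOp_pres cs i j h
    · intro j x y h; exact pibOp_pres cs i j h
  | one => intro j x y h; exact h
  | mul g h _ _ hg hh => intro j x y hxy; exact hg j _ _ (hh j x y hxy)

lemma leL_refl (a : W) : leL cs a a := by
  simp [leL]

lemma leL_trans {a b c : W} (hab : leL cs a b) (hbc : leL cs b c) : leL cs a c := by
  unfold leL at *
  have h1 : cs.length (c * a⁻¹) ≤ cs.length (c * b⁻¹) + cs.length (b * a⁻¹) := by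
    have := cs.length_mul_le (c * b⁻¹) (b * a⁻¹)
    simpa [mul_assoc] using this
  have h2 : cs.length c ≤ cs.length (c * a⁻¹) + cs.length a := by
    have := cs.length_mul_le (c * a⁻¹) a
    simpa [mul_assoc] using this
  omega

lemma leL_antisymm {a b : W} (hab : leL cs a b) (hba : leL cs b a) : a = b := by
  unfold leL at *
  have h1 : cs.length (b * a⁻¹) = 0 := by omega
  have h2 : b * a⁻¹ = 1 := cs.length_eq_zero_iff.mp h1
  have := congrArg (fun z => z * a) h2
  simpa [mul_assoc] using this.symm

lemma min_image {f : Function.End W}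
    (hP : ∀ (j : B) (x y : W), Rel cs j x y → Rel cs j (f x) (f y)) :
    ∀ w : W, leL cs (f 1) (f w) := by
  have key : ∀ n : ℕ, ∀ w : W, cs.length w = n → leL cs (f 1) (f w) := by
    intro n
    induction n using Nat.strong_induction_on with
    | _ n ih =>
      intro w hw
      rcases eq_or_ne w 1 with rfl | hne
      · exact leL_refl cs _
      · obtain ⟨j, hj⟩ := cs.exists_leftDescent_of_ne_one hne
        set u := cs.simple j * w with hu
        have huw : w = cs.simple j * u := by
          rw [hu, cs.simple_mul_simple_cancel_left]
        have hlu : cs.length u < cs.length w := hj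
        have hlsu : cs.length (cs.simple j * u) = cs.length u + 1 := by
          rw [← huw]
          rcases cs.length_simple_mul w j with h' | h'
          · exact absurd h' (by unfold CoxeterSystem.IsLeftDescent at hj; omega)
          · unfold CoxeterSystem.IsLeftDescent at hj
            rw [hu]
            omega
        have hrel : Rel cs j u w := Or.inr ⟨huw, hlsu⟩
        have hrel' := hP j u w hrel
        have hle : leL cs (f 1) (f u) := ih (cs.length u) (by omega) u rfl
        rcases hrel' with heq | ⟨heq, hlen⟩
        · rwa [heq]
        · refine leL_trans cs hle ?_
          unfold leL
          have h1 : f w * (f u)⁻¹ = cs.simple j := by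
            rw [heq, mul_inv_cancel_right]
          rw [h1, heq, hlen, cs.length_simple]
          omega
  intro w
  exact key (cs.length w) w rfl

end BiHeckeAux


open BiHeckeAux in
/-- An element of the biHecke monoid is characterized by its fibers and its image set. -/
theorem biHecke_fibers_image_determine {B W : Type*} [Group W] [Finite W]
    {M : CoxeterMatrix B} (cs : CoxeterSystem M W) (f g : Function.End W)
    (hf : f ∈ biHecke cs) (hg : g ∈ biHecke cs)
    (hfib : ∀ x y : W, f x = f y ↔ g x = g y)
    (him : Set.range f = Set.range g) : f = g := by
  have pf := biHecke_pres cs hf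
  have pg := biHecke_pres cs hg
  have base : f 1 = g 1 := by
    have minf := min_image cs pf
    have ming := min_image cs pg
    have h1 : f 1 ∈ Set.range g := him ▸ Set.mem_range_self 1
    obtain ⟨x, hx⟩ := h1
    have h2 : g 1 ∈ Set.range f := him.symm ▸ Set.mem_range_self 1
    obtain ⟨y, hy⟩ := h2
    have hgf : leL cs (g 1) (f 1) := hx ▸ ming x
    have hfg : leL cs (f 1) (g 1) := hy ▸ minf y
    exact leL_antisymm cs hfg hgf
  have key : ∀ n : ℕ, ∀ w : W, cs.length w = n → f w = g w := by
    intro n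
    induction n using Nat.strong_induction_on with
    | _ n ih =>
      intro w hw
      rcases eq_or_ne w 1 with rfl | hne
      · exact base
      · obtain ⟨j, hj⟩ := cs.exists_leftDescent_of_ne_one hne
        set u := cs.simple j * w with hu
        have huw : w = cs.simple j * u := by
          rw [hu, cs.simple_mul_simple_cancel_left]
        have hlu : cs.length u < cs.length w := hj
        have hlsu : cs.length (cs.simple j * u) = cs.length u + 1 := by
          rw [← huw]
          rcases cs.length_simple_mul w j with h' | h'
          · exact absurd h' (by unfold CoxeterSystem.IsLeftDescent at hj; omega)
          · unfold CoxeterSystem.IsLeftDescent at hj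
            rw [hu]
            omega
        have hrel : Rel cs j u w := Or.inr ⟨huw, hlsu⟩
        have ihu : f u = g u := ih (cs.length u) (by omega) u rfl
        have rf := pf j u w hrel
        have rg := pg j u w hrel
        by_cases hc : f w = f u
        · have hc2 : g w = g u := (hfib w u).mp hc
          rw [hc, ihu, ← hc2]
        · have hc2 : ¬ g w = g u := fun h => hc ((hfib w u).mpr h)
          rcases rf with h | ⟨h, _⟩
          · exact absurd h hc
          rcases rg with h' | ⟨h', _⟩
          · exact absurd h' hc2
          rw [h, h', ihu]
  funext w
  exact key (cs.length w) w rfl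
end

section
/- The submonoid M_1(W) = {f ∈ M(W) : 1·f = 1} of the biHecke monoid is J-trivial; equivalently, the relation f ≤ g defined by w·f ≤_B w·g for all w ∈ W is a partial order on M_1(W) satisfying fg ≤ f and fg ≤ g for all f, g ∈ M_1(W). -/
open scoped Classical

namespace BorelAux
set_option linter.unusedSectionVars false
set_option maxHeartbeats 1000000

open CoxeterSystem List

variable {B W : Type*} [Group W] {M : CoxeterMatrix B} (cs : CoxeterSystem M W)

lemma zmod2_add_self (x : ZMod 2) : x + x = 0 := by revert x; decide

/-- indicator function -/
noncomputable def ind (a w : W) : ZMod 2 := if w = a then 1 else 0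

lemma ind_congr {a a' w w' : W} (h : w = a ↔ w' = a') : ind a w = ind a' w' := by
  unfold ind
  exact if_congr h rfl rfl

lemma conj_eq_iff (y t w : W) : y * w * y⁻¹ = t ↔ w = y⁻¹ * t * y := by
  constructor
  · rintro rfl; group
  · rintro rfl; group

noncomputable def rp (i : B) (p : W × ZMod 2) : W × ZMod 2 :=
  (cs.simple i * p.1 * cs.simple i, p.2 + ind (cs.simple i) p.1)

lemma simple_conj2 (i : B) (w : W) :
    cs.simple i * (cs.simple i * w * cs.simple i) * cs.simple i = w := by
  rw [show cs.simple i * (cs.simple i * w * cs.simple i) * cs.simple i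
      = (cs.simple i * cs.simple i) * w * (cs.simple i * cs.simple i) from by group]
  rw [cs.simple_mul_simple_self i, one_mul, mul_one]

lemma simple_conj_eq_iff (i : B) (w t : W) :
    cs.simple i * w * cs.simple i = t ↔ w = cs.simple i * t * cs.simple i := by
  constructor
  · intro h; rw [← h, simple_conj2]
  · intro h; rw [h, simple_conj2]

lemma rp_invol (i : B) : Function.Involutive (rp cs i) := by
  rintro ⟨w, ε⟩
  unfold rp
  simp only
  refine Prod.ext ?_ ?_
  · exact simple_conj2 cs i w
  · show ε + ind (cs.simple i) w + ind (cs.simple i) (cs.simple i * w * cs.simple i) = ε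
    have h : ind (cs.simple i) (cs.simple i * w * cs.simple i) = ind (cs.simple i) w := by
      refine ind_congr ?_
      rw [simple_conj_eq_iff]
      constructor
      · intro h; rw [h]; rw [show cs.simple i * cs.simple i * cs.simple i
          = (cs.simple i * cs.simple i) * cs.simple i from rfl, cs.simple_mul_simple_self i,
          one_mul]
      · intro h; rw [h, cs.simple_mul_simple_self i, one_mul]
    rw [h, add_assoc, zmod2_add_self, add_zero]

noncomputable def rperm (i : B) : Equiv.Perm (W × ZMod 2) :=
  ⟨rp cs i, rp cs i, rp_invol cs i, rp_invol cs i⟩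

@[simp] lemma rperm_apply (i : B) (p : W × ZMod 2) : rperm cs i p = rp cs i p := rfl

lemma sj_p (i j : B) :
    cs.simple j * (cs.simple i * cs.simple j)
      = (cs.simple i * cs.simple j)⁻¹ * cs.simple j := by
  rw [mul_inv_rev, cs.inv_simple, cs.inv_simple]
  group

lemma sj_pow (i j : B) (n k : ℕ) :
    ((cs.simple i * cs.simple j) ^ n)⁻¹ * cs.simple j * (cs.simple i * cs.simple j) ^ k
      = ((cs.simple i * cs.simple j) ^ (n + k))⁻¹ * cs.simple j := by
  induction k with
  | zero => simp
  | succ k ih =>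
    rw [pow_succ, ← mul_assoc, ih, mul_assoc, sj_p, ← mul_assoc, ← mul_inv_rev,
      show n + (k + 1) = (n + k) + 1 by omega, pow_succ']


lemma gen2 (q c : W) (k : ℕ) :
    (q ^ k)⁻¹ * (q⁻¹ * c) * q ^ k = (q ^ (k + 1))⁻¹ * c * q ^ k := by
  rw [pow_succ, mul_inv_rev]
  group

lemma tau_mul_apply (i j : B) (y : W) (δ : ZMod 2) :
    (rperm cs i * rperm cs j) (y, δ)
      = (cs.simple i * (cs.simple j * y * cs.simple j) * cs.simple i,
          δ + ind (cs.simple j) y + ind (cs.simple i) (cs.simple j * y * cs.simple j)) := by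
  rw [Equiv.Perm.mul_apply]
  show rp cs i (rp cs j (y, δ)) = _
  rw [rp, rp]

lemma tau_pow (i j : B) (k : ℕ) (w : W) (ε : ZMod 2) :
    ((rperm cs i * rperm cs j) ^ k) (w, ε) =
      ((cs.simple i * cs.simple j) ^ k * w * ((cs.simple i * cs.simple j) ^ k)⁻¹,
       ε + ∑ n ∈ Finset.range (2 * k),
            ind (((cs.simple i * cs.simple j) ^ n)⁻¹ * cs.simple j) w) := by
  induction k with
  | zero => simp
  | succ k ih =>
    rw [pow_succ', Equiv.Perm.mul_apply, ih, tau_mul_apply]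
    refine Prod.ext ?_ ?_
    · show cs.simple i * (cs.simple j * ((cs.simple i * cs.simple j) ^ k * w
          * ((cs.simple i * cs.simple j) ^ k)⁻¹) * cs.simple j) * cs.simple i
        = (cs.simple i * cs.simple j) ^ (k + 1) * w * ((cs.simple i * cs.simple j) ^ (k + 1))⁻¹
      rw [pow_succ', mul_inv_rev (cs.simple i * cs.simple j) _,
        mul_inv_rev (cs.simple i) (cs.simple j), cs.inv_simple, cs.inv_simple]
      simp only [mul_assoc]
    · show (ε + ∑ n ∈ Finset.range (2 * k),
            ind (((cs.simple i * cs.simple j) ^ n)⁻¹ * cs.simple j) w)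
          + ind (cs.simple j) ((cs.simple i * cs.simple j) ^ k * w
              * ((cs.simple i * cs.simple j) ^ k)⁻¹)
          + ind (cs.simple i) (cs.simple j * ((cs.simple i * cs.simple j) ^ k * w
              * ((cs.simple i * cs.simple j) ^ k)⁻¹) * cs.simple j)
        = ε + ∑ n ∈ Finset.range (2 * (k + 1)),
            ind (((cs.simple i * cs.simple j) ^ n)⁻¹ * cs.simple j) w
      have e1 : ind (cs.simple j) ((cs.simple i * cs.simple j) ^ k * w
            * ((cs.simple i * cs.simple j) ^ k)⁻¹)
          = ind (((cs.simple i * cs.simple j) ^ (2 * k))⁻¹ * cs.simple j) w := by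
        refine ind_congr ?_
        rw [conj_eq_iff, sj_pow, show k + k = 2 * k by omega]
      have e2 : ind (cs.simple i) (cs.simple j * ((cs.simple i * cs.simple j) ^ k * w
            * ((cs.simple i * cs.simple j) ^ k)⁻¹) * cs.simple j)
          = ind (((cs.simple i * cs.simple j) ^ (2 * k + 1))⁻¹ * cs.simple j) w := by
        refine ind_congr ?_
        rw [simple_conj_eq_iff, conj_eq_iff]
        have hbab : cs.simple j * (cs.simple i * cs.simple j)
            = (cs.simple i * cs.simple j)⁻¹ * cs.simple j := sj_p cs i j
        have h3 : ((cs.simple i * cs.simple j) ^ k)⁻¹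
              * (cs.simple j * cs.simple i * cs.simple j)
              * (cs.simple i * cs.simple j) ^ k
            = ((cs.simple i * cs.simple j) ^ (2 * k + 1))⁻¹ * cs.simple j := by
          rw [show cs.simple j * cs.simple i * cs.simple j
              = cs.simple j * (cs.simple i * cs.simple j) from by group, hbab, gen2, sj_pow,
            show k + 1 + k = 2 * k + 1 by omega]
        rw [h3]
      rw [e1, e2, show 2 * (k + 1) = 2 * k + 1 + 1 by omega, Finset.sum_range_succ,
        Finset.sum_range_succ]
      ring

lemma rperm_liftable : M.IsLiftable (fun i => rperm cs i) := by
  intro i j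
  apply Equiv.ext
  rintro ⟨w, ε⟩
  rw [show ((fun i => rperm cs i) i * (fun i => rperm cs i) j) = rperm cs i * rperm cs j from rfl]
  rw [tau_pow, cs.simple_mul_simple_pow i j]
  set m := M i j with hm
  set p := cs.simple i * cs.simple j with hp
  have hpm : p ^ m = 1 := cs.simple_mul_simple_pow i j
  have hsum : ∑ n ∈ Finset.range (2 * m), ind ((p ^ n)⁻¹ * cs.simple j) w = 0 := by
    have hsplit : ∑ n ∈ Finset.range (2 * m), ind ((p ^ n)⁻¹ * cs.simple j) w
        = ∑ n ∈ Finset.range m, ind ((p ^ n)⁻¹ * cs.simple j) w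
          + ∑ n ∈ Finset.range m, ind ((p ^ (m + n))⁻¹ * cs.simple j) w := by
      rw [show 2 * m = m + m by omega]
      rw [Finset.sum_range_add]
    rw [hsplit]
    have : ∀ n, (p ^ (m + n))⁻¹ = (p ^ n)⁻¹ := by
      intro n; rw [pow_add, hpm, one_mul]
    simp only [this]
    exact zmod2_add_self _
  rw [hsum, add_zero]
  simp

noncomputable def phi : W →* Equiv.Perm (W × ZMod 2) :=
  cs.lift ⟨fun i => rperm cs i, rperm_liftable cs⟩

@[simp] lemma phi_simple (i : B) : phi cs (cs.simple i) = rperm cs i :=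
  cs.lift_apply_simple (rperm_liftable cs) i

/-- The reflection cocycle with values in `ZMod 2`. -/
noncomputable def cc (x w : W) : ZMod 2 := (phi cs x (w, 0)).2

lemma phi_apply (x : W) : ∀ (w : W) (ε : ZMod 2),
    phi cs x (w, ε) = (x * w * x⁻¹, ε + cc cs x w) := by
  refine cs.simple_induction_left (p := fun x => ∀ (w : W) (ε : ZMod 2),
      phi cs x (w, ε) = (x * w * x⁻¹, ε + cc cs x w)) x ?_ ?_
  · intro w ε
    simp [cc]
  · intro y i hy
    intro w ε
    have key : ∀ δ : ZMod 2, phi cs (cs.simple i * y) (w, δ)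
        = (cs.simple i * (y * w * y⁻¹) * cs.simple i,
            δ + (cc cs y w + ind (cs.simple i) (y * w * y⁻¹))) := by
      intro δ
      rw [map_mul, Equiv.Perm.mul_apply, hy w δ, phi_simple]
      show rp cs i _ = _
      rw [rp]
      simp [add_assoc]
    have hcc : cc cs (cs.simple i * y) w
        = cc cs y w + ind (cs.simple i) (y * w * y⁻¹) := by
      rw [cc, key 0, zero_add]
    rw [key ε, hcc]
    refine Prod.ext ?_ rfl
    show cs.simple i * (y * w * y⁻¹) * cs.simple i = cs.simple i * y * w * (cs.simple i * y)⁻¹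
    rw [mul_inv_rev, cs.inv_simple]
    group

lemma cc_mul (x y w : W) : cc cs (x * y) w = cc cs y w + cc cs x (y * w * y⁻¹) := by
  rw [cc, map_mul, Equiv.Perm.mul_apply, phi_apply, phi_apply, zero_add]

lemma cc_simple (i : B) (w : W) : cc cs (cs.simple i) w = ind (cs.simple i) w := by
  rw [cc, phi_simple]
  show (rp cs i (w, 0)).2 = _
  rw [rp, zero_add]


lemma cc_one (w : W) : cc cs 1 w = 0 := by
  rw [cc, map_one]
  rfl

lemma cc_conj_simple_self (ω : List B) : ∀ i : B,
    cc cs (cs.wordProd ω * cs.simple i * (cs.wordProd ω)⁻¹)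
      (cs.wordProd ω * cs.simple i * (cs.wordProd ω)⁻¹) = 1 := by
  induction ω with
  | nil =>
    intro i
    simp only [CoxeterSystem.wordProd_nil, one_mul, inv_one, mul_one]
    rw [cc_simple, ind, if_pos rfl]
  | cons j ω ih =>
    intro i
    set y := cs.wordProd ω with hy
    have hw : cs.wordProd (j :: ω) = cs.simple j * y := cs.wordProd_cons j ω
    set t' := y * cs.simple i * y⁻¹ with ht'
    have htinv : t' * t' = 1 := by
      rw [ht', show y * cs.simple i * y⁻¹ * (y * cs.simple i * y⁻¹)
          = y * (cs.simple i * cs.simple i) * y⁻¹ from by group, cs.simple_mul_simple_self]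
      group
    have hT : cs.wordProd (j :: ω) * cs.simple i * (cs.wordProd (j :: ω))⁻¹
        = cs.simple j * t' * cs.simple j := by
      rw [hw, ht', mul_inv_rev, cs.inv_simple]
      group
    rw [hT]
    set t := cs.simple j * t' * cs.simple j with ht
    -- t = s_j * (t' * s_j),  decompose via cocycle twice
    have h1 : cc cs t t = cc cs (t' * cs.simple j) t
        + cc cs (cs.simple j) ((t' * cs.simple j) * t * (t' * cs.simple j)⁻¹) := by
      rw [← cc_mul]
      congr 1
      rw [ht]; group
    have h2 : cc cs (t' * cs.simple j) t
        = cc cs (cs.simple j) t + cc cs t' (cs.simple j * t * (cs.simple j)⁻¹) := by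
      rw [← cc_mul]
    have h3 : cs.simple j * t * (cs.simple j)⁻¹ = t' := by
      rw [cs.inv_simple, ht, simple_conj2]
    have hinv' : t'⁻¹ = t' := inv_eq_of_mul_eq_one_right htinv
    have h4 : (t' * cs.simple j) * t * (t' * cs.simple j)⁻¹ = t' := by
      rw [mul_inv_rev, cs.inv_simple, ht, hinv']
      rw [show t' * cs.simple j * (cs.simple j * t' * cs.simple j) * (cs.simple j * t')
          = t' * (cs.simple j * cs.simple j) * t' * (cs.simple j * cs.simple j) * t' from by
        group]
      rw [cs.simple_mul_simple_self, mul_one, mul_one, htinv, one_mul]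
    have h5 : cc cs t' t' = 1 := by rw [ht']; exact ih i
    have h6 : ind (cs.simple j) t = ind (cs.simple j) t' := by
      refine ind_congr ?_
      rw [ht, simple_conj_eq_iff, cs.simple_mul_simple_self, one_mul]
    rw [h1, h2, h3, h4, h5, cc_simple, cc_simple]
    simp only [h6]
    rw [show ∀ a b : ZMod 2, a + b + a = b from by decide]

lemma cc_reflection_self {t : W} (ht : cs.IsReflection t) : cc cs t t = 1 := by
  obtain ⟨y, i, rfl⟩ := ht
  obtain ⟨ω, rfl⟩ := cs.wordProd_surjective y
  exact cc_conj_simple_self cs ω i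

lemma cc_wordProd_count (ω : List B) (w : W) :
    cc cs (cs.wordProd ω) w = ((cs.rightInvSeq ω).count w : ZMod 2) := by
  induction ω with
  | nil => simp [cc_one]
  | cons i ω ih =>
    rw [cs.wordProd_cons, cc_mul, ih, cc_simple]
    have hris : cs.rightInvSeq (i :: ω)
        = ((cs.wordProd ω)⁻¹ * cs.simple i * cs.wordProd ω) :: cs.rightInvSeq ω := rfl
    rw [hris]
    have hiff : ind (cs.simple i) (cs.wordProd ω * w * (cs.wordProd ω)⁻¹)
        = if w = (cs.wordProd ω)⁻¹ * cs.simple i * cs.wordProd ω then 1 else 0 := by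
      rw [ind]
      refine if_congr ?_ rfl rfl
      rw [conj_eq_iff]
    rw [hiff, List.count_cons]
    simp only [beq_iff_eq]
    by_cases hc : w = (cs.wordProd ω)⁻¹ * cs.simple i * cs.wordProd ω
    · rw [if_pos hc, if_pos hc.symm]; push_cast; ring
    · rw [if_neg hc, if_neg (fun hh => hc hh.symm)]; push_cast; ring

lemma mem_rightInvSeq_of_cc_one {ω : List B} {t : W} (h : cc cs (cs.wordProd ω) t = 1) :
    t ∈ cs.rightInvSeq ω := by
  by_contra hmem
  rw [cc_wordProd_count] at h
  rw [List.count_eq_zero_of_not_mem hmem] at h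
  simp at h

lemma length_lt_of_cc_one {v t : W} (hrefl : cs.IsReflection t) (h : cc cs v t = 1) :
    cs.length (v * t) < cs.length v := by
  obtain ⟨ω, hred, rfl⟩ := cs.exists_reduced_word' v
  exact (cs.isRightInversion_of_mem_rightInvSeq hred (mem_rightInvSeq_of_cc_one cs h)).2

lemma cc_eq_one_of_isRightInversion {v t : W} (h : cs.IsRightInversion v t) :
    cc cs v t = 1 := by
  by_contra h0
  have h0' : cc cs v t = 0 := by
    revert h0
    generalize cc cs v t = x
    revert x
    decide
  have h1 : cc cs (v * t) t = 1 := by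
    rw [cc_mul]
    have htt : t * t * t⁻¹ = t := by rw [h.1.mul_self, one_mul, h.1.inv]
    rw [htt, cc_reflection_self cs h.1, h0', add_zero]
  have h2 := length_lt_of_cc_one cs h.1 h1
  rw [mul_assoc, h.1.mul_self, mul_one] at h2
  exact absurd h.2 (by omega)

/-- The strong exchange property, for arbitrary words. -/
lemma strongExchange {ω : List B} {t : W} (h : cs.IsRightInversion (cs.wordProd ω) t) :
    ∃ j, j < ω.length ∧ cs.wordProd (ω.eraseIdx j) = cs.wordProd ω * t := by
  have hmem : t ∈ cs.rightInvSeq ω :=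
    mem_rightInvSeq_of_cc_one cs (cc_eq_one_of_isRightInversion cs h)
  obtain ⟨j, hj, hget⟩ := List.mem_iff_getElem.mp hmem
  rw [cs.length_rightInvSeq] at hj
  refine ⟨j, hj, ?_⟩
  rw [← cs.wordProd_mul_getD_rightInvSeq ω j]
  congr 1
  rw [List.getD_eq_getElem?_getD, List.getElem?_eq_getElem (by rwa [cs.length_rightInvSeq])]
  simpa using hget


/-! ### Part II : the Bruhat chain order -/

/-- One step in the Bruhat order: multiply on the right by a reflection, increasing length. -/
def bstep (u v : W) : Prop :=
  ∃ t, cs.IsReflection t ∧ v = u * t ∧ cs.length u < cs.length v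

/-- Bruhat order, as the reflexive-transitive closure of `bstep`. -/
def chainLe (u v : W) : Prop := Relation.ReflTransGen (bstep cs) u v

lemma chainLe_refl (u : W) : chainLe cs u u := Relation.ReflTransGen.refl

lemma chainLe_trans {u v w : W} (h1 : chainLe cs u v) (h2 : chainLe cs v w) :
    chainLe cs u w := Relation.ReflTransGen.trans h1 h2

lemma chainLe_of_bstep {u v : W} (h : bstep cs u v) : chainLe cs u v :=
  Relation.ReflTransGen.single h

lemma chainLe_mul_reflection {u t : W} (ht : cs.IsReflection t)
    (hlen : cs.length u < cs.length (u * t)) : chainLe cs u (u * t) :=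
  chainLe_of_bstep cs ⟨t, ht, rfl, hlen⟩

lemma chainLe_simple_left {u : W} {i : B} (hlen : cs.length u < cs.length (cs.simple i * u)) :
    chainLe cs u (cs.simple i * u) := by
  have hr : cs.IsReflection (u⁻¹ * cs.simple i * u) := by
    have := (cs.isReflection_simple i).conj u⁻¹
    simpa using this
  have he : cs.simple i * u = u * (u⁻¹ * cs.simple i * u) := by group
  rw [he] at hlen ⊢
  exact chainLe_mul_reflection cs hr hlen

lemma chainLe_length_le {u v : W} (h : chainLe cs u v) : cs.length u ≤ cs.length v := by
  induction h with
  | refl => exact le_refl _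
  | tail h2 hedge ih =>
    obtain ⟨t, _, _, hlen⟩ := hedge
    omega

lemma chainLe_eq_of_length_le {u v : W} (h : chainLe cs u v)
    (hlen : cs.length v ≤ cs.length u) : u = v := by
  induction h with
  | refl => rfl
  | tail h2 hedge ih =>
    obtain ⟨t, _, _, hl2⟩ := hedge
    have := chainLe_length_le cs h2
    omega

/-- The subword property, for arbitrary words. -/
lemma exists_sublist_of_chainLe {u v : W} (h : chainLe cs u v) :
    ∀ m : List B, cs.wordProd m = v → ∃ l', l'.Sublist m ∧ cs.wordProd l' = u := by
  induction h with
  | refl => exact fun m hm => ⟨m, List.Sublist.refl m, hm⟩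
  | tail h2 hedge ih =>
    intro m hm
    obtain ⟨t, ht, rfl, hlen⟩ := hedge
    have hinv : cs.IsRightInversion (cs.wordProd m) t := by
      refine ⟨ht, ?_⟩
      rw [hm, mul_assoc, ht.mul_self, mul_one]
      exact hlen
    obtain ⟨j, hj, hje⟩ := strongExchange cs hinv
    have hb : cs.wordProd (m.eraseIdx j) = _ := hje
    rw [hm, mul_assoc, ht.mul_self, mul_one] at hb
    obtain ⟨l', hs, hp⟩ := ih (m.eraseIdx j) hb
    exact ⟨l', hs.trans (List.eraseIdx_sublist m j), hp⟩

lemma leB_of_chainLe {u v : W} (h : chainLe cs u v) : leB cs u v := by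
  obtain ⟨ω, hred, hv⟩ := cs.exists_reduced_word' v
  obtain ⟨l', hs, hp⟩ := exists_sublist_of_chainLe cs h ω hv.symm
  exact ⟨ω, hred, hv.symm, l', hs, hp⟩

lemma zlemma {a t : W} (ht : cs.IsReflection t)
    (hlen : cs.length a < cs.length (a * t)) (i : B) :
    chainLe cs (cs.simple i * a) (a * t)
      ∨ chainLe cs (cs.simple i * a) (cs.simple i * (a * t)) := by
  rcases Nat.lt_or_gt_of_ne (cs.length_simple_mul_ne a i) with hd | hd
  · -- ℓ (s i * a) < ℓ a
    left
    have h1 : chainLe cs (cs.simple i * a) a := by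
      have := chainLe_simple_left cs (u := cs.simple i * a) (i := i)
        (by rwa [← mul_assoc, cs.simple_mul_simple_self, one_mul])
      rwa [← mul_assoc, cs.simple_mul_simple_self, one_mul] at this
    exact chainLe_trans cs h1 (chainLe_mul_reflection cs ht hlen)
  · -- ℓ a < ℓ (s i * a)
    by_cases hh : cs.length (cs.simple i * a) < cs.length (cs.simple i * a * t)
    · right
      have := chainLe_mul_reflection cs ht hh
      rwa [mul_assoc] at this
    · -- then s i * a = a * t
      left
      have hne : cs.length (cs.simple i * a * t) ≠ cs.length (cs.simple i * a) :=
        ht.length_mul_left_ne (cs.simple i * a)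
      have hlt : cs.length (cs.simple i * a * t) < cs.length (cs.simple i * a) := by omega
      obtain ⟨m₀, hred0, ha⟩ := cs.exists_reduced_word' a
      have hca : cs.wordProd (i :: m₀) = cs.simple i * a := by
        rw [cs.wordProd_cons, ← ha]
      have hinv : cs.IsRightInversion (cs.wordProd (i :: m₀)) t := by
        refine ⟨ht, ?_⟩
        rw [hca]
        exact hlt
      obtain ⟨j, hj, hje⟩ := strongExchange cs hinv
      rw [hca] at hje
      cases j with
      | zero =>
        have : cs.wordProd m₀ = cs.simple i * a * t := by
          simpa [List.eraseIdx] using hje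
        rw [← ha] at this
        have heq : cs.simple i * a = a * t := by
          have h2 := congrArg (fun z => z * t) this
          simp only [mul_assoc, ht.mul_self, mul_one] at h2
          rw [← h2]
        rw [← heq]
        exact chainLe_refl cs _
      | succ k =>
        exfalso
        have herase : (i :: m₀).eraseIdx (k + 1) = i :: m₀.eraseIdx k := rfl
        rw [herase, cs.wordProd_cons] at hje
        have hat : cs.wordProd (m₀.eraseIdx k) = a * t := by
          have := hje
          rw [mul_assoc] at this
          exact mul_left_cancel this
        have hlen2 : cs.length (a * t) ≤ (m₀.eraseIdx k).length := by
          rw [← hat]; exact cs.length_wordProd_le _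
        have hklen : k < m₀.length := by simpa using hj
        have : (m₀.eraseIdx k).length = m₀.length - 1 := List.length_eraseIdx_of_lt hklen
        have hla : cs.length a = m₀.length := by rw [ha]; exact hred0
        omega

lemma liftL {a b : W} (h : chainLe cs a b) (i : B) :
    chainLe cs (cs.simple i * a) b ∨ chainLe cs (cs.simple i * a) (cs.simple i * b) := by
  induction h with
  | refl => right; exact chainLe_refl cs _
  | tail h2 hedge ih =>
    obtain ⟨t, ht, rfl, hlen⟩ := hedge
    rcases ih with h3 | h3
    · left
      exact chainLe_trans cs h3 (chainLe_mul_reflection cs ht hlen)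
    · rcases zlemma cs ht hlen i with h4 | h4
      · left; exact chainLe_trans cs h3 h4
      · right; exact chainLe_trans cs h3 h4

lemma isReduced_tail {i : B} {l : List B} (h : cs.IsReduced (i :: l)) : cs.IsReduced l := by
  have h1 : cs.length (cs.simple i * cs.wordProd l) = l.length + 1 := by
    rw [← cs.wordProd_cons]
    exact h
  have h2 := cs.length_simple_mul (cs.wordProd l) i
  have h3 := cs.length_wordProd_le l
  unfold CoxeterSystem.IsReduced
  omega

lemma chainLe_wordProd_sublist :
    ∀ (l : List B), cs.IsReduced l → ∀ l' : List B, l'.Sublist l →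
      chainLe cs (cs.wordProd l') (cs.wordProd l) := by
  intro l
  induction l with
  | nil =>
    intro _ l' hs
    rw [List.sublist_nil.mp hs]
    exact chainLe_refl cs _
  | cons i l₀ ih =>
    intro hred l' hs
    have hred0 : cs.IsReduced l₀ := isReduced_tail cs hred
    have h1 : cs.length (cs.simple i * cs.wordProd l₀) = l₀.length + 1 := by
      rw [← cs.wordProd_cons]; exact hred
    have h3 := cs.length_wordProd_le l₀
    have hup : cs.length (cs.wordProd l₀) < cs.length (cs.simple i * cs.wordProd l₀) := by omega
    have hedge : chainLe cs (cs.wordProd l₀) (cs.wordProd (i :: l₀)) := by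
      rw [cs.wordProd_cons]
      exact chainLe_simple_left cs hup
    rcases List.sublist_cons_iff.mp hs with hc | ⟨r, rfl, hr⟩
    · exact chainLe_trans cs (ih hred0 l' hc) hedge
    · have hrr := ih hred0 r hr
      rcases liftL cs hrr i with h4 | h4
      · rw [cs.wordProd_cons]
        exact chainLe_trans cs h4 hedge
      · rw [cs.wordProd_cons, cs.wordProd_cons]
        exact h4

lemma leB_iff_chainLe {u v : W} : leB cs u v ↔ chainLe cs u v := by
  constructor
  · rintro ⟨l, hred, rfl, l', hs, rfl⟩
    exact chainLe_wordProd_sublist cs l hred l' hs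
  · exact leB_of_chainLe cs


lemma sublist_concat_cases {l' m : List B} {i : B} (h : l'.Sublist (m ++ [i])) :
    l'.Sublist m ∨ ∃ r, l' = r ++ [i] ∧ r.Sublist m := by
  have h2 : l'.reverse.Sublist (i :: m.reverse) := by
    have := List.reverse_sublist.mpr h
    simpa using this
  rcases List.sublist_cons_iff.mp h2 with hc | ⟨r', heq, hr'⟩
  · left
    have := List.reverse_sublist.mpr hc
    simpa using this
  · right
    refine ⟨r'.reverse, ?_, ?_⟩
    · rw [← List.reverse_reverse l', heq]
      simp
    · have := List.reverse_sublist.mpr hr'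
      simpa using this

lemma descent_word {b : W} {i : B} (hd : cs.IsRightDescent b i) :
    ∃ m₀ : List B, cs.IsReduced m₀ ∧ cs.wordProd m₀ = b * cs.simple i ∧
      cs.IsReduced (m₀ ++ [i]) ∧ cs.wordProd (m₀ ++ [i]) = b := by
  obtain ⟨m₀, hred0, hbs⟩ := cs.exists_reduced_word' (b * cs.simple i)
  have hm : cs.wordProd (m₀ ++ [i]) = b := by
    rw [cs.wordProd_append, cs.wordProd_singleton, ← hbs, mul_assoc,
      cs.simple_mul_simple_self, mul_one]
  have hlen : cs.length (b * cs.simple i) + 1 = cs.length b := cs.isRightDescent_iff.mp hd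
  have hmred : cs.IsReduced (m₀ ++ [i]) := by
    unfold CoxeterSystem.IsReduced
    rw [hm, List.length_append, List.length_singleton]
    have : cs.length (b * cs.simple i) = m₀.length := by rw [hbs]; exact hred0
    omega
  exact ⟨m₀, hred0, hbs.symm, hmred, hm⟩

lemma desc_lift {a b : W} (h : chainLe cs a b) {i : B} (hd : cs.IsRightDescent b i) :
    chainLe cs a (b * cs.simple i) ∨ chainLe cs (a * cs.simple i) (b * cs.simple i) := by
  obtain ⟨m₀, hred0, hbs, hmred, hm⟩ := descent_word cs hd
  obtain ⟨l', hs, hu⟩ := exists_sublist_of_chainLe cs h (m₀ ++ [i]) hm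
  rcases sublist_concat_cases hs with hc | ⟨r, rfl, hr⟩
  · left
    have := chainLe_wordProd_sublist cs m₀ hred0 l' hc
    rwa [hu, hbs] at this
  · right
    have hps : cs.wordProd r * cs.simple i = a := by
      rw [← hu, cs.wordProd_append, cs.wordProd_singleton]
    have has : a * cs.simple i = cs.wordProd r := by
      rw [← hps, mul_assoc, cs.simple_mul_simple_self, mul_one]
    have := chainLe_wordProd_sublist cs m₀ hred0 r hr
    rwa [hbs, ← has] at this

lemma rightL {a b : W} (h : chainLe cs a b) (i : B) :
    chainLe cs (a * cs.simple i) b ∨ chainLe cs (a * cs.simple i) (b * cs.simple i) := by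
  by_cases hd : cs.IsRightDescent b i
  · left
    obtain ⟨m₀, hred0, hbs, hmred, hm⟩ := descent_word cs hd
    obtain ⟨l', hs, hu⟩ := exists_sublist_of_chainLe cs h (m₀ ++ [i]) hm
    rcases sublist_concat_cases hs with hc | ⟨r, rfl, hr⟩
    · have := chainLe_wordProd_sublist cs (m₀ ++ [i]) hmred (l' ++ [i]) (hc.append_right [i])
      rwa [cs.wordProd_append, cs.wordProd_singleton, hu, hm] at this
    · have hps : cs.wordProd r * cs.simple i = a := by
        rw [← hu, cs.wordProd_append, cs.wordProd_singleton]
      have has : a * cs.simple i = cs.wordProd r := by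
        rw [← hps, mul_assoc, cs.simple_mul_simple_self, mul_one]
      have := chainLe_wordProd_sublist cs (m₀ ++ [i]) hmred r
        (hr.trans (List.sublist_append_left m₀ [i]))
      rwa [hm, ← has] at this
  · right
    obtain ⟨m, hred, hb⟩ := cs.exists_reduced_word' b
    have hlen : cs.length (b * cs.simple i) = cs.length b + 1 := cs.not_isRightDescent_iff.mp hd
    have hmred : cs.IsReduced (m ++ [i]) := by
      unfold CoxeterSystem.IsReduced
      rw [cs.wordProd_append, cs.wordProd_singleton, ← hb, List.length_append,
        List.length_singleton, hlen, hb, hred]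
    obtain ⟨l', hs, hu⟩ := exists_sublist_of_chainLe cs h m hb.symm
    have := chainLe_wordProd_sublist cs (m ++ [i]) hmred (l' ++ [i]) (hs.append_right [i])
    rwa [cs.wordProd_append, cs.wordProd_append, cs.wordProd_singleton, hu, ← hb] at this

lemma self_le_pi (i : B) (a : W) : chainLe cs a (piOp cs i a) := by
  simp only [piOp]
  split_ifs with hd
  · exact chainLe_refl cs a
  · have hlen : cs.length (a * cs.simple i) = cs.length a + 1 := cs.not_isRightDescent_iff.mp hd
    exact chainLe_mul_reflection cs (cs.isReflection_simple i) (by omega)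

lemma mul_le_pi (i : B) (a : W) : chainLe cs (a * cs.simple i) (piOp cs i a) := by
  simp only [piOp]
  split_ifs with hd
  · have hlen : cs.length (a * cs.simple i) + 1 = cs.length a := cs.isRightDescent_iff.mp hd
    have := chainLe_mul_reflection cs (cs.isReflection_simple i) (u := a * cs.simple i)
      (by rw [mul_assoc, cs.simple_mul_simple_self, mul_one]; omega)
    rwa [mul_assoc, cs.simple_mul_simple_self, mul_one] at this
  · exact chainLe_refl cs _

lemma pib_le_self (i : B) (a : W) : chainLe cs (pibOp cs i a) a := by
  simp only [pibOp]
  split_ifs with hd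
  · have hlen : cs.length (a * cs.simple i) + 1 = cs.length a := cs.isRightDescent_iff.mp hd
    have := chainLe_mul_reflection cs (cs.isReflection_simple i) (u := a * cs.simple i)
      (by rw [mul_assoc, cs.simple_mul_simple_self, mul_one]; omega)
    rwa [mul_assoc, cs.simple_mul_simple_self, mul_one] at this
  · exact chainLe_refl cs _

lemma pib_le_mul (i : B) (a : W) : chainLe cs (pibOp cs i a) (a * cs.simple i) := by
  simp only [pibOp]
  split_ifs with hd
  · exact chainLe_refl cs _
  · have hlen : cs.length (a * cs.simple i) = cs.length a + 1 := cs.not_isRightDescent_iff.mp hd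
    exact chainLe_mul_reflection cs (cs.isReflection_simple i) (by omega)

lemma mono_pi {a b : W} (h : chainLe cs a b) (i : B) :
    chainLe cs (piOp cs i a) (piOp cs i b) := by
  have hb1 := self_le_pi cs i b
  have hb2 := mul_le_pi cs i b
  by_cases hda : cs.IsRightDescent a i
  · rw [show piOp cs i a = a from by simp only [piOp]; rw [if_pos hda]]
    exact chainLe_trans cs h hb1
  · rw [show piOp cs i a = a * cs.simple i from by simp only [piOp]; rw [if_neg hda]]
    rcases rightL cs h i with h1 | h1
    · exact chainLe_trans cs h1 hb1
    · exact chainLe_trans cs h1 hb2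

lemma mono_pib {a b : W} (h : chainLe cs a b) (i : B) :
    chainLe cs (pibOp cs i a) (pibOp cs i b) := by
  have ha1 := pib_le_self cs i a
  have ha2 := pib_le_mul cs i a
  by_cases hdb : cs.IsRightDescent b i
  · rw [show pibOp cs i b = b * cs.simple i from by simp only [pibOp]; rw [if_pos hdb]]
    rcases desc_lift cs h hdb with h1 | h1
    · exact chainLe_trans cs ha1 h1
    · exact chainLe_trans cs ha2 h1
  · rw [show pibOp cs i b = b from by simp only [pibOp]; rw [if_neg hdb]]
    exact chainLe_trans cs ha1 h


/-! ### Part III : left weak order and regressiveness -/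

lemma leL_one_left (w : W) : leL cs 1 w := by
  unfold leL
  simp

lemma desc_of_leL_desc {u v : W} (h : leL cs u v) {i : B} (hd : cs.IsRightDescent u i) :
    cs.IsRightDescent v i := by
  have hus : cs.length (u * cs.simple i) + 1 = cs.length u := cs.isRightDescent_iff.mp hd
  have hvs : cs.length (v * cs.simple i) ≤ cs.length (v * u⁻¹) + cs.length (u * cs.simple i) := by
    have := cs.length_mul_le (v * u⁻¹) (u * cs.simple i)
    rwa [show v * u⁻¹ * (u * cs.simple i) = v * cs.simple i from by group] at this
  unfold CoxeterSystem.IsRightDescent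
  unfold leL at h
  omega

lemma key_length {u v : W} (h : leL cs u v) {i : B} (hdv : cs.IsRightDescent v i)
    (hdu : ¬ cs.IsRightDescent u i) :
    cs.length (v * cs.simple i * u⁻¹) + 1 = cs.length (v * u⁻¹)
      ∧ chainLe cs (v * cs.simple i * u⁻¹) (v * u⁻¹) := by
  have hu : cs.length (u * cs.simple i) = cs.length u + 1 := cs.not_isRightDescent_iff.mp hdu
  have hv : cs.length (v * cs.simple i) + 1 = cs.length v := cs.isRightDescent_iff.mp hdv
  unfold leL at h
  have hlow : cs.length (v * cs.simple i) ≤ cs.length (v * cs.simple i * u⁻¹) + cs.length u := by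
    have := cs.length_mul_le (v * cs.simple i * u⁻¹) u
    rwa [show v * cs.simple i * u⁻¹ * u = v * cs.simple i from by group] at this
  obtain ⟨α, hαred, hα⟩ := cs.exists_reduced_word' (v * u⁻¹)
  obtain ⟨β, hβred, hβ⟩ := cs.exists_reduced_word' u
  have hαlen : α.length = cs.length (v * u⁻¹) := by
    rw [← hαred, ← hα]
  have hβlen : β.length = cs.length u := by
    rw [← hβred, ← hβ]
  have hword : cs.wordProd (α ++ β) = v := by
    rw [cs.wordProd_append, ← hα, ← hβ]
    group
  have hwred : cs.IsReduced (α ++ β) := by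
    unfold CoxeterSystem.IsReduced
    rw [hword, List.length_append]
    omega
  have hinv : cs.IsRightInversion (cs.wordProd (α ++ β)) (cs.simple i) := by
    refine ⟨cs.isReflection_simple i, ?_⟩
    rw [hword]
    omega
  obtain ⟨j, hj, hje⟩ := strongExchange cs hinv
  rw [hword] at hje
  rw [List.length_append] at hj
  by_cases hjα : j < α.length
  · have herase : (α ++ β).eraseIdx j = α.eraseIdx j ++ β :=
      List.eraseIdx_append_of_lt_length hjα β
    have hc' : cs.wordProd (α.eraseIdx j) = v * cs.simple i * u⁻¹ := by
      have h2 : cs.wordProd (α.eraseIdx j) * u = v * cs.simple i := by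
        rw [← hje, herase, cs.wordProd_append, ← hβ]
      rw [← h2]
      group
    have hup : cs.length (v * cs.simple i * u⁻¹) ≤ α.length - 1 := by
      have h3 := cs.length_wordProd_le (α.eraseIdx j)
      rw [hc'] at h3
      have h4 : (α.eraseIdx j).length = α.length - 1 := List.length_eraseIdx_of_lt hjα
      omega
    have hkey : cs.length (v * cs.simple i * u⁻¹) + 1 = cs.length (v * u⁻¹) := by omega
    refine ⟨hkey, ?_⟩
    have hrefl : cs.IsReflection (u * cs.simple i * u⁻¹) := (cs.isReflection_simple i).conj u
    have hcomb : v * cs.simple i * u⁻¹ * (u * cs.simple i * u⁻¹) = v * u⁻¹ := by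
      rw [show v * cs.simple i * u⁻¹ * (u * cs.simple i * u⁻¹)
          = v * (cs.simple i * cs.simple i) * u⁻¹ from by group, cs.simple_mul_simple_self,
        mul_one]
    have := chainLe_mul_reflection cs (u := v * cs.simple i * u⁻¹) hrefl
      (by rw [hcomb]; omega)
    rwa [hcomb] at this
  · exfalso
    push_neg at hjα
    have herase : (α ++ β).eraseIdx j = α ++ β.eraseIdx (j - α.length) :=
      List.eraseIdx_append_of_length_le hjα β
    have h2 : cs.wordProd α * cs.wordProd (β.eraseIdx (j - α.length)) = v * cs.simple i := by
      rw [← cs.wordProd_append, ← herase, hje]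
    have h3 : cs.wordProd (β.eraseIdx (j - α.length)) = u * cs.simple i := by
      rw [← hα] at h2
      have h4 := congrArg (fun z => (v * u⁻¹)⁻¹ * z) h2
      rw [show (v * u⁻¹)⁻¹ * (v * u⁻¹ * cs.wordProd (β.eraseIdx (j - α.length)))
          = cs.wordProd (β.eraseIdx (j - α.length)) from by group] at h4
      rw [h4]
      group
    have h5 := cs.length_wordProd_le (β.eraseIdx (j - α.length))
    rw [h3] at h5
    have h6 : (β.eraseIdx (j - α.length)).length = β.length - 1 :=
      List.length_eraseIdx_of_lt (by omega)
    omega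

lemma step_pi {u v : W} (h : leL cs u v) (i : B) :
    leL cs (piOp cs i u) (piOp cs i v)
      ∧ chainLe cs (piOp cs i v * (piOp cs i u)⁻¹) (v * u⁻¹) := by
  by_cases hdu : cs.IsRightDescent u i
  · have hdv := desc_of_leL_desc cs h hdu
    simp only [piOp, if_pos hdu, if_pos hdv]
    exact ⟨h, chainLe_refl cs _⟩
  · by_cases hdv : cs.IsRightDescent v i
    · simp only [piOp, if_neg hdu, if_pos hdv]
      obtain ⟨hkey, hchain⟩ := key_length cs h hdv hdu
      have hrw : v * (u * cs.simple i)⁻¹ = v * cs.simple i * u⁻¹ := by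
        rw [mul_inv_rev, cs.inv_simple]
        group
      constructor
      · unfold leL
        rw [hrw, cs.not_isRightDescent_iff.mp hdu]
        unfold leL at h
        omega
      · rw [hrw]
        exact hchain
    · simp only [piOp, if_neg hdu, if_neg hdv]
      have hrw : v * cs.simple i * (u * cs.simple i)⁻¹ = v * u⁻¹ := by
        rw [mul_inv_rev, cs.inv_simple]
        rw [show v * cs.simple i * (cs.simple i * u⁻¹)
            = v * (cs.simple i * cs.simple i) * u⁻¹ from by group, cs.simple_mul_simple_self,
          mul_one]
      constructor
      · unfold leL
        rw [hrw, cs.not_isRightDescent_iff.mp hdu, cs.not_isRightDescent_iff.mp hdv]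
        unfold leL at h
        omega
      · rw [hrw]
        exact chainLe_refl cs _

lemma step_pib {u v : W} (h : leL cs u v) (i : B) :
    leL cs (pibOp cs i u) (pibOp cs i v)
      ∧ chainLe cs (pibOp cs i v * (pibOp cs i u)⁻¹) (v * u⁻¹) := by
  by_cases hdu : cs.IsRightDescent u i
  · have hdv := desc_of_leL_desc cs h hdu
    simp only [pibOp, if_pos hdu, if_pos hdv]
    have hrw : v * cs.simple i * (u * cs.simple i)⁻¹ = v * u⁻¹ := by
      rw [mul_inv_rev, cs.inv_simple]
      rw [show v * cs.simple i * (cs.simple i * u⁻¹)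
          = v * (cs.simple i * cs.simple i) * u⁻¹ from by group, cs.simple_mul_simple_self,
        mul_one]
    constructor
    · unfold leL
      rw [hrw]
      have h1 := cs.isRightDescent_iff.mp hdu
      have h2 := cs.isRightDescent_iff.mp hdv
      unfold leL at h
      omega
    · rw [hrw]
      exact chainLe_refl cs _
  · by_cases hdv : cs.IsRightDescent v i
    · simp only [pibOp, if_neg hdu, if_pos hdv]
      obtain ⟨hkey, hchain⟩ := key_length cs h hdv hdu
      constructor
      · unfold leL
        unfold leL at h
        have hv : cs.length (v * cs.simple i) + 1 = cs.length v := cs.isRightDescent_iff.mp hdv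
        omega
      · exact hchain
    · simp only [pibOp, if_neg hdu, if_neg hdv]
      exact ⟨h, chainLe_refl cs _⟩


/-! ### Part IV : the biHecke monoid -/

lemma biHecke_mono {f : Function.End W} (hf : f ∈ biHecke cs) :
    ∀ a b : W, chainLe cs a b → chainLe cs (f a) (f b) := by
  unfold biHecke at hf
  induction hf using Submonoid.closure_induction with
  | mem x hx =>
    rcases hx with hx | hx
    · obtain ⟨i, rfl⟩ := hx
      exact fun a b h => mono_pi cs h i
    · obtain ⟨i, rfl⟩ := hx
      exact fun a b h => mono_pib cs h i
  | one => exact fun a b h => h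
  | mul x y hx hy ihx ihy => exact fun a b h => ihx _ _ (ihy _ _ h)

lemma biHecke_left {f : Function.End W} (hf : f ∈ biHecke cs) :
    ∀ u v : W, leL cs u v →
      leL cs (f u) (f v) ∧ chainLe cs (f v * (f u)⁻¹) (v * u⁻¹) := by
  unfold biHecke at hf
  induction hf using Submonoid.closure_induction with
  | mem x hx =>
    rcases hx with hx | hx
    · obtain ⟨i, rfl⟩ := hx
      exact fun u v h => step_pi cs h i
    · obtain ⟨i, rfl⟩ := hx
      exact fun u v h => step_pib cs h i
  | one => exact fun u v h => ⟨h, chainLe_refl cs _⟩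
  | mul x y hx hy ihx ihy =>
    intro u v h
    obtain ⟨h1, h2⟩ := ihy u v h
    obtain ⟨h3, h4⟩ := ihx _ _ h1
    exact ⟨h3, chainLe_trans cs h4 h2⟩

lemma biHecke_regressive {f : Function.End W} (hf : f ∈ biHecke cs) (h1 : f 1 = 1) (w : W) :
    chainLe cs (f w) w := by
  obtain ⟨-, hc⟩ := biHecke_left cs hf 1 w (leL_one_left cs w)
  rw [h1] at hc
  simpa using hc

end BorelAux

/-- The Borel submonoid `M_1(W) = {f ∈ M(W) : 1·f = 1}` is `J`-trivial: the relation
`f ≤ g ⟺ ∀ w, w·f ≤_B w·g` is a partial order on `M_1(W)` satisfying `fg ≤ f` and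
`fg ≤ g`. -/
theorem borel_Jtrivial {B W : Type*} [Group W] [Finite W] {M : CoxeterMatrix B}
    (cs : CoxeterSystem M W) :
    (∀ f : Function.End W, f ∈ biHecke cs → f 1 = 1 → ∀ w, leB cs (f w) (f w)) ∧
    (∀ f g h : Function.End W, f ∈ biHecke cs → f 1 = 1 → g ∈ biHecke cs → g 1 = 1 →
      h ∈ biHecke cs → h 1 = 1 →
      (∀ w, leB cs (f w) (g w)) → (∀ w, leB cs (g w) (h w)) → ∀ w, leB cs (f w) (h w)) ∧
    (∀ f g : Function.End W, f ∈ biHecke cs → f 1 = 1 → g ∈ biHecke cs → g 1 = 1 →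
      (∀ w, leB cs (f w) (g w)) → (∀ w, leB cs (g w) (f w)) → f = g) ∧
    (∀ f g : Function.End W, f ∈ biHecke cs → f 1 = 1 → g ∈ biHecke cs → g 1 = 1 →
      (∀ w, leB cs ((f * g : Function.End W) w) (f w)) ∧
      (∀ w, leB cs ((f * g : Function.End W) w) (g w))) := by
  refine ⟨?_, ?_, ?_, ?_⟩
  · intro f _ _ w
    exact (BorelAux.leB_iff_chainLe cs).mpr (BorelAux.chainLe_refl cs (f w))
  · intro f g h _ _ _ _ _ _ hfg hgh w
    exact (BorelAux.leB_iff_chainLe cs).mpr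
      (BorelAux.chainLe_trans cs ((BorelAux.leB_iff_chainLe cs).mp (hfg w))
        ((BorelAux.leB_iff_chainLe cs).mp (hgh w)))
  · intro f g _ _ _ _ hfg hgf
    funext w
    exact BorelAux.chainLe_eq_of_length_le cs ((BorelAux.leB_iff_chainLe cs).mp (hfg w))
      (BorelAux.chainLe_length_le cs ((BorelAux.leB_iff_chainLe cs).mp (hgf w)))
  · intro f g hf h1f hg h1g
    constructor
    · intro w
      show leB cs (f (g w)) (f w)
      exact (BorelAux.leB_iff_chainLe cs).mpr
        (BorelAux.biHecke_mono cs hf _ _ (BorelAux.biHecke_regressive cs hg h1g w))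
    · intro w
      show leB cs (f (g w)) (g w)
      exact (BorelAux.leB_iff_chainLe cs).mpr (BorelAux.biHecke_regressive cs hf h1f (g w))
end

section
/- The cutting relation on a finite Coxeter group is a partial order refining both weak orders: the relation v ⊑ w, defined by v = w^K for some right block K of w, is reflexive, antisymmetric and transitive, and v ⊑ w implies v ≤_L w and v ≤_R w. -/
open scoped Classical

section CuttingAux

set_option linter.unusedSectionVars false

open CoxeterSystem List

variable {B W : Type*} [Group W] {M : CoxeterMatrix B} (cs : CoxeterSystem M W)

/-- Multiplicity count with classical decidability. -/
noncomputable def mcount (x : W) : List W → ℕ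
  | [] => 0
  | t :: l => (if t = x then 1 else 0) + mcount x l

theorem mcount_cons (x t : W) (l : List W) :
    mcount x (t :: l) = (if t = x then 1 else 0) + mcount x l := rfl

theorem mcount_append (x : W) (l₁ l₂ : List W) :
    mcount x (l₁ ++ l₂) = mcount x l₁ + mcount x l₂ := by
  induction l₁ with
  | nil => simp [mcount]
  | cons t l ih => rw [List.cons_append, mcount_cons, mcount_cons, ih]; omega

theorem mcount_eq_zero (x : W) {l : List W} (h : x ∉ l) : mcount x l = 0 := by
  induction l with
  | nil => rfl
  | cons t l ih =>
    simp only [List.mem_cons, not_or] at h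
    rw [mcount_cons, if_neg (fun h' => h.1 h'.symm), ih h.2]

noncomputable def etaFun (i : B) : W × ℤˣ → W × ℤˣ :=
  fun p => (cs.simple i * p.1 * cs.simple i, if p.1 = cs.simple i then -p.2 else p.2)

theorem etaFun_invol (i : B) (p : W × ℤˣ) : etaFun cs i (etaFun cs i p) = p := by
  obtain ⟨x, ε⟩ := p
  by_cases h : x = cs.simple i
  · simp [etaFun, h]
  · have h2 : cs.simple i * x * cs.simple i ≠ cs.simple i := by
      intro hc
      apply h
      have := congrArg (fun z => cs.simple i * z * cs.simple i) hc
      simpa [mul_assoc] using this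
    have h3 : x * cs.simple i ≠ 1 := fun hc => h (by
      rw [← mul_one x, ← cs.simple_mul_simple_self i, ← mul_assoc, hc, one_mul])
    simp [etaFun, h, h2, h3, mul_assoc]

noncomputable def etaPerm (i : B) : Equiv.Perm (W × ℤˣ) :=
  ⟨etaFun cs i, etaFun cs i, fun p => etaFun_invol cs i p, fun p => etaFun_invol cs i p⟩

theorem etaWord_apply (ω : List B) (x : W) (ε : ℤˣ) :
    ((ω.map (etaPerm cs)).prod) (x, ε) =
      (cs.wordProd ω * x * (cs.wordProd ω)⁻¹,
        (-1 : ℤˣ) ^ (mcount x (cs.rightInvSeq ω)) * ε) := by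
  induction ω with
  | nil => simp [mcount]
  | cons i ω ih =>
    rw [List.map_cons, List.prod_cons, Equiv.Perm.mul_apply, ih]
    have hris : cs.rightInvSeq (i :: ω) =
        ((cs.wordProd ω)⁻¹ * cs.simple i * cs.wordProd ω) :: cs.rightInvSeq ω := rfl
    show etaFun cs i _ = _
    rw [etaFun, hris]
    by_cases hx : x = (cs.wordProd ω)⁻¹ * cs.simple i * cs.wordProd ω
    · have hA : cs.wordProd ω * x * (cs.wordProd ω)⁻¹ = cs.simple i := by
        rw [hx]; simp [mul_assoc]
      rw [Prod.mk.injEq]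
      constructor
      · show cs.simple i * (cs.wordProd ω * x * (cs.wordProd ω)⁻¹) * cs.simple i = _
        rw [wordProd_cons]
        simp [mul_assoc]
      · show (if cs.wordProd ω * x * (cs.wordProd ω)⁻¹ = cs.simple i then
            -((-1:ℤˣ) ^ mcount x (cs.rightInvSeq ω) * ε) else _) = _
        rw [if_pos hA, mcount_cons, if_pos hx.symm, pow_add, pow_one, neg_one_mul, neg_mul]
    · have hA : cs.wordProd ω * x * (cs.wordProd ω)⁻¹ ≠ cs.simple i := by
        intro hc
        apply hx
        have := congrArg (fun z => (cs.wordProd ω)⁻¹ * z * cs.wordProd ω) hc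
        simpa [mul_assoc] using this
      rw [Prod.mk.injEq]
      constructor
      · show cs.simple i * (cs.wordProd ω * x * (cs.wordProd ω)⁻¹) * cs.simple i = _
        rw [wordProd_cons]
        simp [mul_assoc]
      · show (if cs.wordProd ω * x * (cs.wordProd ω)⁻¹ = cs.simple i then _ else
            (-1:ℤˣ) ^ mcount x (cs.rightInvSeq ω) * ε) = _
        rw [if_neg hA, mcount_cons, if_neg (fun h' => hx h'.symm), zero_add]

theorem wordProd_alternatingWord_add_two_mul (i i' : B) (n : ℕ) :
    cs.wordProd (alternatingWord i i' (n + 2 * M i i')) = cs.wordProd (alternatingWord i i' n) := by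
  rw [prod_alternatingWord_eq_mul_pow, prod_alternatingWord_eq_mul_pow]
  have h1 : Even (n + 2 * M i i') ↔ Even n := by simp [parity_simps]
  have h2 : (n + 2 * M i i') / 2 = n / 2 + M i i' := by omega
  rw [h2, pow_add, simple_mul_simple_pow, mul_one]
  by_cases h : Even n
  · rw [if_pos (h1.mpr h), if_pos h]
  · rw [if_neg (fun hh => h (h1.mp hh)), if_neg h]

theorem ris_alternatingWord (i i' : B) (n : ℕ) :
    cs.rightInvSeq (alternatingWord i i' n) =
      ((List.range n).reverse).map (fun k => cs.wordProd (alternatingWord i i' (2 * k + 1))) := by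
  induction n generalizing i i' with
  | zero => simp [alternatingWord]
  | succ n ih =>
    rw [alternatingWord_succ, rightInvSeq_concat, ih i' i]
    have hcongr : List.map (⇑(MulAut.conj (cs.simple i')))
        (List.map (fun k => cs.wordProd (alternatingWord i' i (2 * k + 1))) (List.range n).reverse)
        = List.map ((fun k => cs.wordProd (alternatingWord i i' (2 * k + 1))) ∘ Nat.succ)
            (List.range n).reverse := by
      rw [List.map_map]
      apply List.map_congr_left
      intro k _
      show MulAut.conj (cs.simple i') (cs.wordProd (alternatingWord i' i (2 * k + 1)))
          = cs.wordProd (alternatingWord i i' (2 * (k + 1) + 1))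
      have h1 : 2 * (k + 1) + 1 = (2 * k + 2) + 1 := by ring
      rw [h1, alternatingWord_succ i i' (2 * k + 2), wordProd_concat]
      have h2 : alternatingWord i' i (2 * k + 2) = i' :: alternatingWord i' i (2 * k + 1) := by
        rw [alternatingWord_succ' i' i (2 * k + 1), if_neg (by simp [parity_simps])]
      rw [h2, wordProd_cons, MulAut.conj_apply, inv_simple]
    rw [hcongr, List.concat_eq_append, List.range_succ_eq_map, List.reverse_cons,
      List.map_append, ← List.map_reverse, List.map_map]
    congr 1
    show [cs.simple i'] = [cs.wordProd (alternatingWord i i' (2 * 0 + 1))]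
    have : alternatingWord i i' (2 * 0 + 1) = [i'] := rfl
    rw [this, wordProd_singleton]

theorem prod_map_etaPerm_alternatingWord (i i' : B) (m : ℕ) :
    ((alternatingWord i i' (2 * m)).map (etaPerm cs)).prod = (etaPerm cs i * etaPerm cs i') ^ m := by
  induction m with
  | zero => simp [alternatingWord]
  | succ m ih =>
    have h : alternatingWord i i' (2 * (m + 1)) = i :: i' :: alternatingWord i i' (2 * m) := by
      have h1 : 2 * (m + 1) = (2 * m + 1) + 1 := by ring
      rw [h1, alternatingWord_succ' i i' (2 * m + 1), alternatingWord_succ' i i' (2 * m),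
        if_neg (by simp [parity_simps]), if_pos (by simp [parity_simps])]
    rw [h, List.map_cons, List.map_cons, List.prod_cons, List.prod_cons, ih, pow_succ']
    rw [mul_assoc]

theorem etaPerm_liftable : M.IsLiftable (etaPerm cs) := by
  intro i i'
  rw [← prod_map_etaPerm_alternatingWord]
  apply Equiv.ext
  intro p
  obtain ⟨x, ε⟩ := p
  rw [etaWord_apply]
  have hπ : cs.wordProd (alternatingWord i i' (2 * M i i')) = 1 := by
    have := wordProd_alternatingWord_add_two_mul cs i i' 0
    simpa [alternatingWord] using this
  have hdup : cs.rightInvSeq (alternatingWord i i' (2 * M i i')) =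
      ((List.range (M i i')).reverse).map
        (fun k => cs.wordProd (alternatingWord i i' (2 * k + 1))) ++
      ((List.range (M i i')).reverse).map
        (fun k => cs.wordProd (alternatingWord i i' (2 * k + 1))) := by
    rw [ris_alternatingWord, two_mul, List.range_add, List.reverse_append, List.map_append]
    congr 1
    rw [List.map_reverse, List.map_map, ← List.map_reverse]
    apply List.map_congr_left
    intro k _
    show cs.wordProd (alternatingWord i i' (2 * (M i i' + k) + 1))
        = cs.wordProd (alternatingWord i i' (2 * k + 1))
    have h1 : 2 * (M i i' + k) + 1 = (2 * k + 1) + 2 * M i i' := by ring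
    rw [h1, wordProd_alternatingWord_add_two_mul cs i i' (2 * k + 1)]
  have hsign : (-1 : ℤˣ) ^ (mcount x (cs.rightInvSeq (alternatingWord i i' (2 * M i i')))) = 1 := by
    rw [hdup, mcount_append, ← two_mul, pow_mul]
    norm_num
  rw [hπ, hsign]
  simp

noncomputable def etaHom : W →* Equiv.Perm (W × ℤˣ) := cs.lift ⟨etaPerm cs, etaPerm_liftable cs⟩

theorem etaHom_wordProd (ω : List B) : etaHom cs (cs.wordProd ω) = (ω.map (etaPerm cs)).prod := by
  induction ω with
  | nil => simp [wordProd_nil]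
  | cons i ω ih =>
    rw [wordProd_cons, map_mul, ih, List.map_cons, List.prod_cons, etaHom, lift_apply_simple]

theorem parity_mcount_ris {ω₁ ω₂ : List B} (h : cs.wordProd ω₁ = cs.wordProd ω₂) (x : W) :
    (Even (mcount x (cs.rightInvSeq ω₁)) ↔ Even (mcount x (cs.rightInvSeq ω₂))) := by
  have h1 : ((ω₁.map (etaPerm cs)).prod) (x, 1) = ((ω₂.map (etaPerm cs)).prod) (x, 1) := by
    rw [← etaHom_wordProd, ← etaHom_wordProd, h]
  rw [etaWord_apply, etaWord_apply] at h1
  have h2 : (-1 : ℤˣ) ^ (mcount x (cs.rightInvSeq ω₁)) =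
      (-1) ^ (mcount x (cs.rightInvSeq ω₂)) := by
    have := congrArg Prod.snd h1
    simpa using this
  constructor <;> intro hp
  · by_contra hodd
    rw [hp.neg_one_pow, (Nat.not_even_iff_odd.mp hodd).neg_one_pow] at h2
    exact absurd h2 (by decide)
  · by_contra hodd
    rw [hp.neg_one_pow, (Nat.not_even_iff_odd.mp hodd).neg_one_pow] at h2
    exact absurd h2 (by decide)

theorem simple_mem_rightInvSeq {ω : List B} (hω : cs.IsReduced ω) {i : B}
    (h : cs.IsRightDescent (cs.wordProd ω) i) : cs.simple i ∈ cs.rightInvSeq ω := by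
  obtain ⟨ω', hred', heq'⟩ := cs.exists_reduced_word' (cs.wordProd ω * cs.simple i)
  have hprod : cs.wordProd (ω'.concat i) = cs.wordProd ω := by
    rw [wordProd_concat, ← heq', mul_assoc]
    simp
  have hnotmem : cs.simple i ∉ List.map (MulAut.conj (cs.simple i)) (cs.rightInvSeq ω') := by
    intro hmem
    obtain ⟨t, ht, hconj⟩ := List.mem_map.mp hmem
    have ht' : t = cs.simple i := by
      rw [MulAut.conj_apply, inv_simple] at hconj
      have := congrArg (fun z => cs.simple i * z * cs.simple i) hconj
      simpa [mul_assoc] using this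
    rw [ht'] at ht
    have hinv := cs.isRightInversion_of_mem_rightInvSeq hred' ht
    have hlt : cs.length (cs.wordProd ω' * cs.simple i) < cs.length (cs.wordProd ω') := hinv.2
    rw [← heq'] at hlt
    rw [mul_assoc] at hlt
    simp only [simple_mul_simple_self, mul_one] at hlt
    exact absurd h (by rw [IsRightDescent]; omega)
  have hc : mcount (cs.simple i) (cs.rightInvSeq (ω'.concat i)) = 1 := by
    rw [cs.rightInvSeq_concat, List.concat_eq_append, mcount_append,
      mcount_eq_zero _ hnotmem, mcount_cons, if_pos rfl]
    rfl
  have hpar := parity_mcount_ris cs hprod (cs.simple i)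
  by_contra hnm
  have h0 : mcount (cs.simple i) (cs.rightInvSeq ω) = 0 := mcount_eq_zero _ hnm
  rw [hc, h0] at hpar
  exact absurd (hpar.mpr Even.zero) (by decide)

theorem exists_eraseIdx_of_descent {ω : List B} (hω : cs.IsReduced ω) {i : B}
    (h : cs.IsRightDescent (cs.wordProd ω) i) :
    ∃ j, j < ω.length ∧ cs.wordProd ω * cs.simple i = cs.wordProd (ω.eraseIdx j) := by
  obtain ⟨j, hj, hget⟩ := List.mem_iff_getElem.mp (simple_mem_rightInvSeq cs hω h)
  have hj' : j < ω.length := by simpa using hj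
  refine ⟨j, hj', ?_⟩
  have hd := cs.wordProd_mul_getD_rightInvSeq ω j
  have hgd : (cs.rightInvSeq ω).getD j 1 = cs.simple i := by
    rw [List.getD_eq_getElem?_getD, List.getElem?_eq_getElem hj, hget]
    rfl
  rw [hgd] at hd
  exact hd

theorem simple_mem_parab {K : Set B} {k : B} (hk : k ∈ K) : cs.simple k ∈ parab cs K :=
  Subgroup.subset_closure ⟨k, hk, rfl⟩

theorem parab_mono {K K' : Set B} (h : K ⊆ K') : parab cs K ≤ parab cs K' :=
  Subgroup.closure_mono (Set.image_mono h)

theorem wordProd_mem_parab {K : Set B} :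
    ∀ l : List B, (∀ i ∈ l, i ∈ K) → cs.wordProd l ∈ parab cs K
  | [], _ => by simpa using one_mem _
  | i :: l, h => by
      rw [wordProd_cons]
      exact mul_mem (simple_mem_parab cs (h i (by simp)))
        (wordProd_mem_parab l fun j hj => h j (by simp [hj]))

theorem mem_parab_iff {K : Set B} {x : W} :
    x ∈ parab cs K ↔ ∃ l : List B, (∀ i ∈ l, i ∈ K) ∧ cs.wordProd l = x := by
  constructor
  · intro hx
    have hx' : x ∈ Subgroup.closure (cs.simple '' K) := hx
    clear hx
    induction hx' using Subgroup.closure_induction with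
    | mem y hy =>
        obtain ⟨i, hi, rfl⟩ := hy
        exact ⟨[i], by simpa using hi, by simp⟩
    | one => exact ⟨[], by simp, by simp⟩
    | mul y z hy hz ihy ihz =>
        obtain ⟨l₁, h₁, rfl⟩ := ihy
        obtain ⟨l₂, h₂, rfl⟩ := ihz
        refine ⟨l₁ ++ l₂, ?_, by rw [wordProd_append]⟩
        intro i hi
        rcases List.mem_append.mp hi with h | h
        · exact h₁ i h
        · exact h₂ i h
    | inv y hy ihy =>
        obtain ⟨l, h₁, rfl⟩ := ihy
        exact ⟨l.reverse, fun i hi => h₁ i (List.mem_reverse.mp hi), by simp⟩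
  · rintro ⟨l, hl, rfl⟩
    exact wordProd_mem_parab cs l hl

theorem exists_reduced_word_subset {K : Set B} :
    ∀ l : List B, (∀ i ∈ l, i ∈ K) →
      ∃ l' : List B, (∀ i ∈ l', i ∈ K) ∧ cs.wordProd l' = cs.wordProd l ∧ cs.IsReduced l' := by
  have H : ∀ (n : ℕ) (l : List B), l.length ≤ n → (∀ i ∈ l, i ∈ K) →
      ∃ l' : List B, (∀ i ∈ l', i ∈ K) ∧ cs.wordProd l' = cs.wordProd l ∧ cs.IsReduced l' := by
    intro n
    induction n with
    | zero =>
        intro l hlen hK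
        have : l = [] := List.eq_nil_of_length_eq_zero (by omega)
        subst this
        exact ⟨[], by simp, rfl, by simp [CoxeterSystem.IsReduced]⟩
    | succ n ihn =>
        intro l hlen hK
        by_cases hred : cs.IsReduced l
        · exact ⟨l, hK, rfl, hred⟩
        · have hex : ∃ m, ¬ cs.IsReduced (l.take m) := ⟨l.length, by rwa [List.take_length]⟩
          have hn₀ : ¬ cs.IsReduced (l.take (Nat.find hex)) := Nat.find_spec hex
          have hn₀_le : Nat.find hex ≤ l.length := Nat.find_min' hex (by rwa [List.take_length])
          have hn₀_pos : 0 < Nat.find hex := by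
            rcases Nat.eq_zero_or_pos (Nat.find hex) with h0 | h
            · exfalso; apply hn₀; rw [h0]; simp [CoxeterSystem.IsReduced]
            · exact h
          have hlne : l ≠ [] := by
            intro h0
            apply hred
            rw [h0]
            simp [CoxeterSystem.IsReduced]
          have hlpos : 0 < l.length := List.length_pos_iff.mpr hlne
          set j := Nat.find hex - 1 with hjdef
          have hjlt : j < l.length := by omega
          have hjred : cs.IsReduced (l.take j) := not_not.mp (Nat.find_min hex (by omega))
          have htake : l.take (j + 1) = l.take j ++ [l[j]] := by
            rw [List.take_succ, List.getElem?_eq_getElem hjlt]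
            rfl
          have hn₀j : Nat.find hex = j + 1 := by omega
          rw [hn₀j, htake] at hn₀
          have hlenj : (l.take j).length = j := by rw [List.length_take]; omega
          have hlj : cs.length (cs.wordProd (l.take j)) = j := by
            have := hjred
            rwa [CoxeterSystem.IsReduced, hlenj] at this
          have hprod2 : cs.wordProd (l.take j ++ [l[j]])
              = cs.wordProd (l.take j) * cs.simple l[j] := by
            rw [wordProd_append, wordProd_singleton]
          have hdesc : cs.IsRightDescent (cs.wordProd (l.take j)) l[j] := by
            rcases cs.length_mul_simple (cs.wordProd (l.take j)) l[j] with hcase | hcase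
            · exfalso
              apply hn₀
              show cs.length _ = _
              rw [hprod2, hcase, hlj, List.length_append, hlenj, List.length_singleton]
            · rw [IsRightDescent]
              omega
          obtain ⟨j', hj'lt, hj'⟩ := exists_eraseIdx_of_descent cs hjred hdesc
          rw [hlenj] at hj'lt
          have hlen'' : ((l.take j).eraseIdx j' ++ l.drop (j + 1)).length = l.length - 2 := by
            rw [List.length_append]
            have h1 := List.length_eraseIdx_add_one (by rwa [hlenj] : j' < (l.take j).length)
            rw [List.length_drop]
            omega
          have hK'' : ∀ i ∈ (l.take j).eraseIdx j' ++ l.drop (j + 1), i ∈ K := by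
            intro i hi
            rcases List.mem_append.mp hi with h | h
            · exact hK i ((List.take_sublist j l).mem (List.mem_of_mem_eraseIdx h))
            · exact hK i ((List.drop_sublist (j + 1) l).mem h)
          have hprod'' : cs.wordProd ((l.take j).eraseIdx j' ++ l.drop (j + 1))
              = cs.wordProd l := by
            rw [wordProd_append, ← hj']
            conv_rhs => rw [← List.take_append_drop (j + 1) l]
            rw [wordProd_append, htake, hprod2]
          obtain ⟨l', hK', hprod', hred'⟩ :=
            ihn ((l.take j).eraseIdx j' ++ l.drop (j + 1)) (by omega) hK''
          exact ⟨l', hK', by rw [hprod', hprod''], hred'⟩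
  exact fun l => H l.length l le_rfl

theorem exists_rightDescent_parab {K : Set B} {x : W} (hx : x ∈ parab cs K) (hne : x ≠ 1) :
    ∃ k ∈ K, cs.IsRightDescent x k := by
  obtain ⟨l0, hl0K, hl0prod⟩ := (mem_parab_iff cs).mp hx
  obtain ⟨l, hlK, hlprod, hlred⟩ := exists_reduced_word_subset cs l0 hl0K
  have hlx : cs.wordProd l = x := by rw [hlprod, hl0prod]
  have hlne : l ≠ [] := by
    intro h0
    apply hne
    rw [← hlx, h0, wordProd_nil]
  set k := l.getLast hlne with hkdef
  have hsplit : l.dropLast ++ [k] = l := List.dropLast_append_getLast hlne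
  refine ⟨k, hlK _ (List.getLast_mem hlne), ?_⟩
  have h0 : cs.wordProd l = cs.wordProd l.dropLast * cs.simple k := by
    conv_lhs => rw [← hsplit]
    rw [wordProd_append, wordProd_singleton]
  have hxs : x * cs.simple k = cs.wordProd l.dropLast := by
    rw [← hlx, h0, mul_assoc]
    simp
  have hlen1 : cs.length x = l.length := by rw [← hlx]; exact hlred
  have hlen2 : cs.length (x * cs.simple k) ≤ l.length - 1 := by
    rw [hxs]
    calc cs.length (cs.wordProd l.dropLast) ≤ l.dropLast.length := cs.length_wordProd_le _
    _ = l.length - 1 := List.length_dropLast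
  have hlpos : 0 < l.length := List.length_pos_iff.mpr hlne
  rw [IsRightDescent]
  omega

theorem key_A {K : Set B} {v : W} (hv : ∀ k ∈ K, ¬ cs.IsRightDescent v k) :
    ∀ x ∈ parab cs K, cs.length (v * x) = cs.length v + cs.length x := by
  have hSne : ∃ n, ∃ y ∈ parab cs K, cs.length (v * y) = n :=
    ⟨cs.length v, 1, one_mem _, by simp⟩
  obtain ⟨x₀, hx₀mem, hx₀len⟩ := Nat.find_spec hSne
  have hmin : ∀ y ∈ parab cs K, cs.length (v * x₀) ≤ cs.length (v * y) := by
    intro y hy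
    rw [hx₀len]
    exact Nat.find_min' hSne ⟨y, hy, rfl⟩
  set m := v * x₀ with hmdef
  have hm : ∀ y ∈ parab cs K, cs.length m ≤ cs.length (m * y) := by
    intro y hy
    have h1 : m * y = v * (x₀ * y) := by rw [hmdef, mul_assoc]
    rw [h1]
    exact hmin _ (mul_mem hx₀mem hy)
  have claim1 : ∀ (n : ℕ) (x : W), x ∈ parab cs K → cs.length x ≤ n →
      cs.length (m * x) = cs.length m + cs.length x := by
    intro n
    induction n with
    | zero =>
        intro x hx hlen
        have : x = 1 := (cs.length_eq_zero_iff).mp (by omega)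
        subst this
        simp
    | succ n ihn =>
        intro x hx hlen
        by_cases hx1 : x = 1
        · subst hx1; simp
        · obtain ⟨l0, hl0K, hl0prod⟩ := (mem_parab_iff cs).mp hx
          obtain ⟨l, hlK, hlprod, hlred⟩ := exists_reduced_word_subset cs l0 hl0K
          have hlx : cs.wordProd l = x := by rw [hlprod, hl0prod]
          have hlne : l ≠ [] := by
            intro h0
            apply hx1
            rw [← hlx, h0, wordProd_nil]
          set k := l.getLast hlne with hkdef
          set l₁ := l.dropLast with hl₁def
          have hsplit : l₁ ++ [k] = l := List.dropLast_append_getLast hlne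
          set x' := cs.wordProd l₁ with hx'def
          have hxx' : x = x' * cs.simple k := by
            rw [← hlx, ← hsplit, wordProd_append, wordProd_singleton]
          have hl₁red : cs.IsReduced l₁ := by
            rw [hl₁def, List.dropLast_eq_take]
            exact hlred.take _
          have hlenx : cs.length x = l.length := by rw [← hlx]; exact hlred
          have hlenl₁ : l₁.length = l.length - 1 := List.length_dropLast
          have hlpos : 0 < l.length := List.length_pos_iff.mpr hlne
          have hlenx' : cs.length x' = l.length - 1 := by
            have := hl₁red
            rwa [CoxeterSystem.IsReduced, hlenl₁] at this
          have hx'mem : x' ∈ parab cs K :=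
            wordProd_mem_parab cs l₁ (fun i hi => hlK i ((List.dropLast_sublist l).mem hi))
          have ih' : cs.length (m * x') = cs.length m + cs.length x' :=
            ihn x' hx'mem (by omega)
          have hkK : k ∈ K := hlK _ (List.getLast_mem hlne)
          -- no descent of m * x' at k
          have hnd : ¬ cs.IsRightDescent (m * x') k := by
            intro hdesc
            obtain ⟨ρ, hρred, hρ⟩ := cs.exists_reduced_word' m
            have hω : cs.wordProd (ρ ++ l₁) = m * x' := by rw [wordProd_append, ← hρ]
            have hmρ : cs.length m = ρ.length := by rw [hρ]; exact hρred
            have hωred : cs.IsReduced (ρ ++ l₁) := by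
              show cs.length _ = _
              rw [hω, List.length_append, ih']
              omega
            have hdesc' : cs.IsRightDescent (cs.wordProd (ρ ++ l₁)) k := by rwa [hω]
            obtain ⟨jj, hjjlt, hjj⟩ := exists_eraseIdx_of_descent cs hωred hdesc'
            rw [List.length_append] at hjjlt
            rcases Nat.lt_or_ge jj ρ.length with hcase | hcase
            · rw [List.eraseIdx_append_of_lt_length hcase, hω, wordProd_append] at hjj
              have hy : m * (x' * cs.simple k * x'⁻¹) = cs.wordProd (ρ.eraseIdx jj) := by
                calc m * (x' * cs.simple k * x'⁻¹) = (m * x' * cs.simple k) * x'⁻¹ := by group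
                _ = (cs.wordProd (ρ.eraseIdx jj) * x') * x'⁻¹ := by rw [hjj]
                _ = cs.wordProd (ρ.eraseIdx jj) := by group
              have hymem : x' * cs.simple k * x'⁻¹ ∈ parab cs K :=
                mul_mem (mul_mem hx'mem (simple_mem_parab cs hkK)) (inv_mem hx'mem)
              have hlb := hm _ hymem
              have h1 := List.length_eraseIdx_add_one hcase
              have hub : cs.length (m * (x' * cs.simple k * x'⁻¹)) ≤ ρ.length - 1 := by
                rw [hy]
                calc cs.length (cs.wordProd (ρ.eraseIdx jj)) ≤ (ρ.eraseIdx jj).length :=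
                  cs.length_wordProd_le _
                _ = ρ.length - 1 := by omega
              omega
            · rw [List.eraseIdx_append_of_length_le hcase, hω, wordProd_append, ← hρ] at hjj
              have h3 : x' * cs.simple k = cs.wordProd (l₁.eraseIdx (jj - ρ.length)) := by
                apply mul_left_cancel (a := m)
                rw [← mul_assoc]
                exact hjj
              have h4 : cs.length x ≤ (l₁.eraseIdx (jj - ρ.length)).length := by
                rw [hxx', h3]
                exact cs.length_wordProd_le _
              have h5 : jj - ρ.length < l₁.length := by omega
              have h6 := List.length_eraseIdx_add_one h5
              omega
          have hstep : cs.length (m * x' * cs.simple k) = cs.length (m * x') + 1 :=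
            (cs.not_isRightDescent_iff).mp hnd
          have hfin : m * x = m * x' * cs.simple k := by rw [hxx', ← mul_assoc]
          rw [hfin, hstep, ih']
          omega
  have hvm : v = m * x₀⁻¹ := by rw [hmdef]; group
  have hx₀inv : x₀⁻¹ ∈ parab cs K := inv_mem hx₀mem
  have hveq : v = m := by
    by_cases hone : x₀⁻¹ = 1
    · rw [hvm, hone, mul_one]
    · exfalso
      obtain ⟨k, hkK, hkdesc⟩ := exists_rightDescent_parab cs hx₀inv hone
      have h1 : cs.length v = cs.length m + cs.length x₀⁻¹ := by
        rw [hvm]; exact claim1 _ _ hx₀inv le_rfl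
      have h2 : cs.length (v * cs.simple k) = cs.length m + cs.length (x₀⁻¹ * cs.simple k) := by
        rw [hvm, mul_assoc]
        exact claim1 _ _ (mul_mem hx₀inv (simple_mem_parab cs hkK)) le_rfl
      have h3 : cs.length (x₀⁻¹ * cs.simple k) < cs.length x₀⁻¹ := hkdesc
      exact hv k hkK (by rw [IsRightDescent]; omega)
  intro x hx
  rw [hveq]
  exact claim1 (cs.length x) x hx le_rfl

theorem key_A' {J : Set B} {v : W} (hv : ∀ j ∈ J, ¬ cs.IsLeftDescent v j) :
    ∀ x ∈ parab cs J, cs.length (x * v) = cs.length x + cs.length v := by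
  have hv' : ∀ j ∈ J, ¬ cs.IsRightDescent v⁻¹ j := fun j hj => by
    rw [cs.isRightDescent_inv_iff]; exact hv j hj
  intro x hx
  have h := key_A cs hv' x⁻¹ (inv_mem hx)
  calc cs.length (x * v) = cs.length ((x * v)⁻¹) := (cs.length_inv _).symm
  _ = cs.length (v⁻¹ * x⁻¹) := by rw [mul_inv_rev]
  _ = cs.length v⁻¹ + cs.length x⁻¹ := h
  _ = cs.length x + cs.length v := by rw [cs.length_inv, cs.length_inv]; omega

/-- Two-sided conjugation formulation of the block condition. -/
def Blk (w : W) (K J : Set B) : Prop :=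
  (∀ x ∈ parab cs K, w * x * w⁻¹ ∈ parab cs J) ∧ (∀ y ∈ parab cs J, w⁻¹ * y * w ∈ parab cs K)

theorem blk_of_image {w : W} {K J : Set B}
    (h : (fun x => w * x) '' (parab cs K : Set W) = (fun x => x * w) '' (parab cs J : Set W)) :
    Blk cs w K J := by
  constructor
  · intro x hx
    have hmem : w * x ∈ (fun x => x * w) '' (parab cs J : Set W) := by
      rw [← h]; exact ⟨x, hx, rfl⟩
    obtain ⟨y, hy, hyx⟩ := hmem
    have : w * x * w⁻¹ = y := by rw [← hyx]; group
    rw [this]; exact hy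
  · intro y hy
    have hmem : y * w ∈ (fun x => w * x) '' (parab cs K : Set W) := by
      rw [h]; exact ⟨y, hy, rfl⟩
    obtain ⟨x, hx, hxy⟩ := hmem
    have heq : w⁻¹ * y * w = x := by
      have h2 : w * x = y * w := hxy
      have := congrArg (fun z => w⁻¹ * z) h2
      simpa [mul_assoc] using this.symm
    rw [heq]; exact hx

theorem image_of_blk {w : W} {K J : Set B} (h : Blk cs w K J) :
    (fun x => w * x) '' (parab cs K : Set W) = (fun x => x * w) '' (parab cs J : Set W) := by
  ext z
  constructor
  · rintro ⟨x, hx, rfl⟩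
    exact ⟨w * x * w⁻¹, h.1 x hx, by group⟩
  · rintro ⟨y, hy, rfl⟩
    exact ⟨w⁻¹ * y * w, h.2 y hy, by group⟩

theorem blk_shift {w v b : W} {K J : Set B} (h : Blk cs w K J) (hw : w = v * b)
    (hb : b ∈ parab cs K) : Blk cs v K J := by
  constructor
  · intro x hx
    have h1 : v * x * v⁻¹ = w * (b⁻¹ * x * b) * w⁻¹ := by rw [hw]; group
    rw [h1]
    exact h.1 _ (mul_mem (mul_mem (inv_mem hb) hx) hb)
  · intro y hy
    have h1 : v⁻¹ * y * v = b * (w⁻¹ * y * w) * b⁻¹ := by rw [hw]; group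
    rw [h1]
    exact mul_mem (mul_mem hb (h.2 y hy)) (inv_mem hb)

theorem noLeftDescent_of_blk {v : W} {K J : Set B} (hB : Blk cs v K J)
    (hnd : ∀ k ∈ K, ¬ cs.IsRightDescent v k) : ∀ j ∈ J, ¬ cs.IsLeftDescent v j := by
  intro j hj hdesc
  have hy : v⁻¹ * cs.simple j * v ∈ parab cs K := hB.2 _ (simple_mem_parab cs hj)
  have hne : v⁻¹ * cs.simple j * v ≠ 1 := by
    intro h
    have hs : cs.simple j = 1 := by
      have := congrArg (fun z => v * z * v⁻¹) h
      simpa [mul_assoc] using this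
    have h1 := cs.length_simple j
    rw [hs, cs.length_one] at h1
    omega
  have heq : cs.simple j * v = v * (v⁻¹ * cs.simple j * v) := by group
  have hlen : cs.length (cs.simple j * v) = cs.length v + cs.length (v⁻¹ * cs.simple j * v) := by
    rw [heq]
    exact key_A cs hnd _ hy
  have hpos : 0 < cs.length (v⁻¹ * cs.simple j * v) := by
    rcases Nat.eq_zero_or_pos (cs.length (v⁻¹ * cs.simple j * v)) with h0 | h
    · exact absurd ((cs.length_eq_zero_iff).mp h0) hne
    · exact h
  rw [IsLeftDescent] at hdesc
  omega

theorem cuts_le_both {v w : W} (h : cuts cs v w) : leL cs v w ∧ leR cs v w := by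
  obtain ⟨K, J, him, u, hu, hw, hnd⟩ := h
  have hB : Blk cs w K J := blk_of_image cs him
  have hBv : Blk cs v K J := blk_shift cs hB hw hu
  have hlen : cs.length w = cs.length v + cs.length u := by
    rw [hw]; exact key_A cs hnd u hu
  constructor
  · show cs.length (w * v⁻¹) + cs.length v = cs.length w
    have hj : w * v⁻¹ = v * u * v⁻¹ := by rw [hw]
    have hjmem : v * u * v⁻¹ ∈ parab cs J := hBv.1 u hu
    have hnl := noLeftDescent_of_blk cs hBv hnd
    have hkey := key_A' cs hnl _ hjmem
    have hvu : (v * u * v⁻¹) * v = w := by rw [hw]; group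
    rw [hj]
    calc cs.length (v * u * v⁻¹) + cs.length v = cs.length ((v * u * v⁻¹) * v) := hkey.symm
    _ = cs.length w := by rw [hvu]
  · show cs.length v + cs.length (v⁻¹ * w) = cs.length w
    have huw : v⁻¹ * w = u := by rw [hw]; group
    rw [huw]
    omega

end CuttingAux

/-- The cutting relation `⊑` is a partial order on `W` refining both weak orders. -/
theorem cuts_partialOrder {B W : Type*} [Group W] [Finite W] {M : CoxeterMatrix B}
    (cs : CoxeterSystem M W) :
    (∀ w : W, cuts cs w w) ∧
    (∀ v w : W, cuts cs v w → cuts cs w v → v = w) ∧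
    (∀ u v w : W, cuts cs u v → cuts cs v w → cuts cs u w) ∧
    (∀ v w : W, cuts cs v w → leL cs v w ∧ leR cs v w) := by
  refine ⟨?_, ?_, ?_, fun v w h => cuts_le_both cs h⟩
  · -- reflexivity
    intro w
    have hPe : parab cs (∅ : Set B) = ⊥ := by
      unfold parab
      rw [Set.image_empty, Subgroup.closure_empty]
    refine ⟨∅, ∅, ?_, 1, one_mem _, (mul_one w).symm, by simp⟩
    rw [hPe]
    simp
  · -- antisymmetry
    intro v w h1 h2
    have l1 := (cuts_le_both cs h1).2
    have l2 := (cuts_le_both cs h2).2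
    rw [leR] at l1 l2
    have hvw : cs.length (v⁻¹ * w) = 0 := by omega
    exact inv_mul_eq_one.mp ((cs.length_eq_zero_iff).mp hvw)
  · -- transitivity
    intro u v w h1 h2
    obtain ⟨K₁, J₁, him1, a, ha, hva, hnd1⟩ := h1
    obtain ⟨K₂, J₂, him2, b, hb, hwb, hnd2⟩ := h2
    have hBv1 : Blk cs v K₁ J₁ := blk_of_image cs him1
    have hBu1 : Blk cs u K₁ J₁ := blk_shift cs hBv1 hva ha
    have hBw2 : Blk cs w K₂ J₂ := blk_of_image cs him2
    have hBv2 : Blk cs v K₂ J₂ := blk_shift cs hBw2 hwb hb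
    have hlv : cs.length v = cs.length u + cs.length a := by
      rw [hva]; exact key_A cs hnd1 a ha
    have hαmem : u * a * u⁻¹ ∈ parab cs J₁ := hBu1.1 a ha
    have hnl1 := noLeftDescent_of_blk cs hBu1 hnd1
    have hαlen : cs.length (u * a * u⁻¹) = cs.length a := by
      have hk1 := key_A' cs hnl1 _ hαmem
      have hk2 : (u * a * u⁻¹) * u = u * a := by group
      rw [hk2] at hk1
      have hk3 : cs.length (u * a) = cs.length u + cs.length a := key_A cs hnd1 a ha
      omega
    have hndU : ∀ k ∈ K₁ ∪ K₂, ¬ cs.IsRightDescent u k := by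
      rintro k (hk | hk)
      · exact hnd1 k hk
      · intro hdesc
        have hval : v * cs.simple k = (u * a * u⁻¹) * (u * cs.simple k) := by
          rw [hva]; group
        have hub : cs.length (v * cs.simple k) ≤
            cs.length (u * a * u⁻¹) + cs.length (u * cs.simple k) := by
          rw [hval]; exact cs.length_mul_le _ _
        have hv2 := (cs.not_isRightDescent_iff).mp (hnd2 k hk)
        have hd2 : cs.length (u * cs.simple k) < cs.length u := hdesc
        omega
    refine ⟨K₁ ∪ K₂, J₁ ∪ J₂, ?_, a * b,
      mul_mem (parab_mono cs Set.subset_union_left ha)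
        (parab_mono cs Set.subset_union_right hb),
      by rw [hwb, hva, mul_assoc], hndU⟩
    apply image_of_blk
    have hβ : v * b * v⁻¹ ∈ parab cs J₂ := hBv2.1 b hb
    constructor
    · intro x hx
      have hle : parab cs (K₁ ∪ K₂) ≤
          (parab cs (J₁ ∪ J₂)).comap (MulAut.conj w).toMonoidHom := by
        apply (Subgroup.closure_le _).mpr
        rintro z ⟨k, hk, rfl⟩
        show (MulAut.conj w).toMonoidHom (cs.simple k) ∈ parab cs (J₁ ∪ J₂)
        have happ : (MulAut.conj w).toMonoidHom (cs.simple k) = w * cs.simple k * w⁻¹ := by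
          simp [MulAut.conj_apply]
        rw [happ]
        rcases hk with hk | hk
        · have hjm : v * cs.simple k * v⁻¹ ∈ parab cs J₁ :=
            hBv1.1 _ (simple_mem_parab cs hk)
          have hcomp : w * cs.simple k * w⁻¹ =
              (v * b * v⁻¹) * (v * cs.simple k * v⁻¹) * (v * b * v⁻¹)⁻¹ := by
            rw [hwb]; group
          rw [hcomp]
          exact mul_mem (mul_mem (parab_mono cs Set.subset_union_right hβ)
            (parab_mono cs Set.subset_union_left hjm))
            (inv_mem (parab_mono cs Set.subset_union_right hβ))
        · exact parab_mono cs Set.subset_union_right (hBw2.1 _ (simple_mem_parab cs hk))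
      have := hle hx
      rw [Subgroup.mem_comap] at this
      have happ : (MulAut.conj w).toMonoidHom x = w * x * w⁻¹ := by
        simp [MulAut.conj_apply]
      rwa [happ] at this
    · intro y hy
      have hle : parab cs (J₁ ∪ J₂) ≤
          (parab cs (K₁ ∪ K₂)).comap (MulAut.conj w⁻¹).toMonoidHom := by
        apply (Subgroup.closure_le _).mpr
        rintro z ⟨j, hj, rfl⟩
        show (MulAut.conj w⁻¹).toMonoidHom (cs.simple j) ∈ parab cs (K₁ ∪ K₂)
        have happ : (MulAut.conj w⁻¹).toMonoidHom (cs.simple j)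
            = w⁻¹ * cs.simple j * w := by
          simp [MulAut.conj_apply]
        rw [happ]
        rcases hj with hj | hj
        · have hkm : v⁻¹ * cs.simple j * v ∈ parab cs K₁ :=
            hBv1.2 _ (simple_mem_parab cs hj)
          have hcomp : w⁻¹ * cs.simple j * w = b⁻¹ * (v⁻¹ * cs.simple j * v) * b := by
            rw [hwb]; group
          rw [hcomp]
          exact mul_mem (mul_mem (inv_mem (parab_mono cs Set.subset_union_right hb))
            (parab_mono cs Set.subset_union_left hkm))
            (parab_mono cs Set.subset_union_right hb)
        · exact parab_mono cs Set.subset_union_right (hBw2.2 _ (simple_mem_parab cs hj))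
      have := hle hy
      rw [Subgroup.mem_comap] at this
      have happ : (MulAut.conj w⁻¹).toMonoidHom y = w⁻¹ * y * w := by
        simp [MulAut.conj_apply]
      rwa [happ] at this
end
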